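/- arXiv:2102.05959 — 6 statements merged into one kernel-verified Lean document; each statement's English description precedes it below -/
import Mathlib

section
/- Let f ∈ P_{s+2} and g ∈ P_{r+2} be homogeneous polynomials (r, s ≥ 0 integers) with ‖f‖ ≤ F and ‖g‖ ≤ G for some reals F, G ≥ 0. Then ‖{f,g}‖ ≤ (s+2)(r+2)·F·G. -/
open MvPolynomial

/-- The Poisson bracket `{f,g} = ∑_j (∂f/∂v_j ∂g/∂u_j − ∂f/∂u_j ∂g/∂v_j)`. -/
noncomputable def poissonBracket (n : ℕ) (f g : MvPolynomial (Fin n ⊕ Fin n) ℂ) :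
    MvPolynomial (Fin n ⊕ Fin n) ℂ :=
  ∑ j : Fin n,
    (pderiv (Sum.inr j) f * pderiv (Sum.inl j) g -
      pderiv (Sum.inl j) f * pderiv (Sum.inr j) g)

/-- The ℓ¹-norm `‖f‖ = ∑ |c_{ℓ,ℓ̃}|` of the coefficients of a polynomial. -/
noncomputable def polyNorm (n : ℕ) (f : MvPolynomial (Fin n ⊕ Fin n) ℂ) : ℝ :=
  ∑ d ∈ f.support, ‖coeff d f‖

namespace PoissonAux

variable {n : ℕ}

lemma polyNorm_eq_sum (f : MvPolynomial (Fin n ⊕ Fin n) ℂ)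
    (S : Finset ((Fin n ⊕ Fin n) →₀ ℕ)) (hS : f.support ⊆ S) :
    polyNorm n f = ∑ d ∈ S, ‖coeff d f‖ := by
  refine Finset.sum_subset hS fun d _ hd => ?_
  rw [MvPolynomial.notMem_support_iff.mp hd]
  simp

lemma polyNorm_nonneg (f : MvPolynomial (Fin n ⊕ Fin n) ℂ) : 0 ≤ polyNorm n f :=
  Finset.sum_nonneg fun _ _ => norm_nonneg _

lemma polyNorm_zero : polyNorm n 0 = 0 := by simp [polyNorm]

lemma polyNorm_add_le (f g : MvPolynomial (Fin n ⊕ Fin n) ℂ) :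
    polyNorm n (f + g) ≤ polyNorm n f + polyNorm n g := by
  rw [polyNorm_eq_sum (f + g) (f.support ∪ g.support)
    (MvPolynomial.support_add),
    polyNorm_eq_sum f (f.support ∪ g.support) Finset.subset_union_left,
    polyNorm_eq_sum g (f.support ∪ g.support) Finset.subset_union_right,
    ← Finset.sum_add_distrib]
  refine Finset.sum_le_sum fun d _ => ?_
  rw [MvPolynomial.coeff_add]
  exact norm_add_le _ _

lemma polyNorm_neg (f : MvPolynomial (Fin n ⊕ Fin n) ℂ) :
    polyNorm n (-f) = polyNorm n f := by
  simp [polyNorm, MvPolynomial.support_neg]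

lemma polyNorm_sub_le (f g : MvPolynomial (Fin n ⊕ Fin n) ℂ) :
    polyNorm n (f - g) ≤ polyNorm n f + polyNorm n g := by
  rw [sub_eq_add_neg]
  exact (polyNorm_add_le f (-g)).trans (by rw [polyNorm_neg])

lemma polyNorm_sum_le {ι : Type*} (t : Finset ι)
    (h : ι → MvPolynomial (Fin n ⊕ Fin n) ℂ) :
    polyNorm n (∑ i ∈ t, h i) ≤ ∑ i ∈ t, polyNorm n (h i) := by
  classical
  induction t using Finset.induction_on with
  | empty => simp [polyNorm_zero]
  | insert x t hx ih =>
      rw [Finset.sum_insert hx, Finset.sum_insert hx]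
      exact (polyNorm_add_le _ _).trans (by linarith)

lemma polyNorm_monomial_le (d : (Fin n ⊕ Fin n) →₀ ℕ) (c : ℂ) :
    polyNorm n (monomial d c) ≤ ‖c‖ := by
  classical
  by_cases hc : c = 0
  · simp [hc, polyNorm_zero]
  · rw [polyNorm, MvPolynomial.support_monomial, if_neg hc, Finset.sum_singleton,
      MvPolynomial.coeff_monomial, if_pos rfl]

lemma polyNorm_mul_le (f g : MvPolynomial (Fin n ⊕ Fin n) ℂ) :
    polyNorm n (f * g) ≤ polyNorm n f * polyNorm n g := by
  classical
  conv_lhs => rw [f.as_sum, g.as_sum, Finset.sum_mul_sum]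
  refine (polyNorm_sum_le _ _).trans ?_
  refine le_trans (Finset.sum_le_sum fun d _ => polyNorm_sum_le _ _) ?_
  rw [polyNorm, polyNorm, Finset.sum_mul_sum]
  refine Finset.sum_le_sum fun d _ => Finset.sum_le_sum fun e _ => ?_
  rw [MvPolynomial.monomial_mul]
  exact (polyNorm_monomial_le _ _).trans (by rw [norm_mul])

lemma polyNorm_pderiv_le (x : Fin n ⊕ Fin n) (f : MvPolynomial (Fin n ⊕ Fin n) ℂ) :
    polyNorm n (pderiv x f) ≤
      ∑ d ∈ f.support, (d x : ℝ) * ‖coeff d f‖ := by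
  classical
  conv_lhs => rw [f.as_sum]
  rw [map_sum]
  refine (polyNorm_sum_le _ _).trans (Finset.sum_le_sum fun d _ => ?_)
  rw [pderiv_monomial]
  refine (polyNorm_monomial_le _ _).trans ?_
  rw [norm_mul, Complex.norm_natCast, mul_comm]

lemma sum_degree (d : (Fin n ⊕ Fin n) →₀ ℕ) :
    ∑ x : Fin n ⊕ Fin n, d x = d.degree := by
  rw [Finsupp.degree]
  exact (Finset.sum_subset (Finset.subset_univ _) fun x _ hx =>
    Finsupp.notMem_support_iff.mp hx).symm

end PoissonAux

theorem stmt1 (n : ℕ) (hn : 1 ≤ n) (r s : ℕ)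
    (f g : MvPolynomial (Fin n ⊕ Fin n) ℂ)
    (hf : f.IsHomogeneous (s + 2)) (hg : g.IsHomogeneous (r + 2))
    (F G : ℝ) (hF0 : 0 ≤ F) (hG0 : 0 ≤ G)
    (hF : polyNorm n f ≤ F) (hG : polyNorm n g ≤ G) :
    polyNorm n (poissonBracket n f g) ≤ ((s : ℝ) + 2) * ((r : ℝ) + 2) * F * G := by
  classical
  open PoissonAux in
  -- Bound on partial derivatives of g:
  have hgbound : ∀ x : Fin n ⊕ Fin n,
      polyNorm n (pderiv x g) ≤ ((r : ℝ) + 2) * G := by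
    intro x
    refine (polyNorm_pderiv_le x g).trans ?_
    have h1 : ∑ d ∈ g.support, (d x : ℝ) * ‖coeff d g‖ ≤
        ∑ d ∈ g.support, ((r : ℝ) + 2) * ‖coeff d g‖ := by
      refine Finset.sum_le_sum fun d hd => ?_
      have hdeg : d.degree = r + 2 := by rw [Finsupp.degree_eq_weight_one]; exact hg (MvPolynomial.mem_support_iff.mp hd)
      have hle : d x ≤ r + 2 := by
        rw [← hdeg, ← sum_degree d]
        exact Finset.single_le_sum (fun _ _ => Nat.zero_le _) (Finset.mem_univ x)
      have : (d x : ℝ) ≤ (r : ℝ) + 2 := by exact_mod_cast hle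
      exact mul_le_mul_of_nonneg_right this (norm_nonneg _)
    rw [← Finset.mul_sum] at h1
    refine h1.trans ?_
    exact mul_le_mul_of_nonneg_left hG (by positivity)
  -- define A x := ∑_{d∈supp f} d x * |c_d|
  set A : (Fin n ⊕ Fin n) → ℝ :=
    fun x => ∑ d ∈ f.support, (d x : ℝ) * ‖coeff d f‖ with hA
  have hA_nonneg : ∀ x, 0 ≤ A x := fun x =>
    Finset.sum_nonneg fun d _ => mul_nonneg (Nat.cast_nonneg _) (norm_nonneg _)
  have hAsum : ∑ x : Fin n ⊕ Fin n, A x = ((s : ℝ) + 2) * polyNorm n f := by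
    rw [hA, Finset.sum_comm, polyNorm, Finset.mul_sum]
    refine Finset.sum_congr rfl fun d hd => ?_
    rw [← Finset.sum_mul]
    congr 1
    have hdeg : d.degree = s + 2 := by rw [Finsupp.degree_eq_weight_one]; exact hf (MvPolynomial.mem_support_iff.mp hd)
    rw [← Nat.cast_sum, sum_degree d, hdeg]
    push_cast; ring
  have key : polyNorm n (poissonBracket n f g) ≤
      ∑ j : Fin n, (A (Sum.inr j) + A (Sum.inl j)) * (((r : ℝ) + 2) * G) := by
    refine (polyNorm_sum_le _ _).trans (Finset.sum_le_sum fun j _ => ?_)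
    refine (polyNorm_sub_le _ _).trans ?_
    have h1 := (polyNorm_mul_le (pderiv (Sum.inr j) f) (pderiv (Sum.inl j) g))
    have h2 := (polyNorm_mul_le (pderiv (Sum.inl j) f) (pderiv (Sum.inr j) g))
    have b1 : polyNorm n (pderiv (Sum.inr j) f * pderiv (Sum.inl j) g) ≤
        A (Sum.inr j) * (((r : ℝ) + 2) * G) := by
      refine h1.trans (mul_le_mul (polyNorm_pderiv_le _ _) (hgbound _)
        (polyNorm_nonneg _) (hA_nonneg _))
    have b2 : polyNorm n (pderiv (Sum.inl j) f * pderiv (Sum.inr j) g) ≤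
        A (Sum.inl j) * (((r : ℝ) + 2) * G) := by
      refine h2.trans (mul_le_mul (polyNorm_pderiv_le _ _) (hgbound _)
        (polyNorm_nonneg _) (hA_nonneg _))
    rw [add_mul]
    exact add_le_add b1 b2
  refine key.trans ?_
  rw [← Finset.sum_mul]
  have hsum : ∑ j : Fin n, (A (Sum.inr j) + A (Sum.inl j)) =
      ((s : ℝ) + 2) * polyNorm n f := by
    rw [← hAsum, Fintype.sum_sum_type]
    rw [Finset.sum_add_distrib]
    ring
  rw [hsum]
  have h3 : ((s : ℝ) + 2) * polyNorm n f ≤ ((s : ℝ) + 2) * F :=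
    mul_le_mul_of_nonneg_left hF (by positivity)
  calc ((s : ℝ) + 2) * polyNorm n f * (((r : ℝ) + 2) * G)
      ≤ ((s : ℝ) + 2) * F * (((r : ℝ) + 2) * G) :=
        mul_le_mul_of_nonneg_right h3 (by positivity)
    _ = ((s : ℝ) + 2) * ((r : ℝ) + 2) * F * G := by ring
end

section
/- Let χ ∈ P_{r+2} be a homogeneous polynomial with expansion χ = Σ_{|k|+|k̃|=r+2} c_{k,k̃} u^k v^k̃ and set D = Σ_{k,k̃} |c_{k,k̃}| · max_{1≤j≤n} max(k_j, k̃_j). Let g ∈ P_{s+2}. Then for every integer j ≥ 1, ‖(1/j!) L_χ^j g‖ ≤ (∏_{i=0}^{j−1}(s+ir+2) / j!) · D^j · ‖g‖. -/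
open MvPolynomial

/-- The constant `D = ∑_{k,k̃} |c_{k,k̃}| · max_j max(k_j, k̃_j)` associated with a
generating function `χ = ∑ c_{k,k̃} u^k v^k̃`. -/
noncomputable def Dconst (n : ℕ) (χ : MvPolynomial (Fin n ⊕ Fin n) ℂ) : ℝ :=
  ∑ d ∈ χ.support,
    ‖coeff d χ‖ *
      ((Finset.univ.sup fun j : Fin n => max (d (Sum.inl j)) (d (Sum.inr j)) : ℕ) : ℝ)

namespace Stmt2Aux

variable {n : ℕ}

lemma polyNorm_eq_sum (f : MvPolynomial (Fin n ⊕ Fin n) ℂ)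
    {S : Finset ((Fin n ⊕ Fin n) →₀ ℕ)} (hS : f.support ⊆ S) :
    polyNorm n f = ∑ d ∈ S, ‖coeff d f‖ :=
  Finset.sum_subset hS fun d _ hd => by
    simp [MvPolynomial.notMem_support_iff.mp hd]

lemma polyNorm_nonneg (f : MvPolynomial (Fin n ⊕ Fin n) ℂ) : 0 ≤ polyNorm n f :=
  Finset.sum_nonneg fun _ _ => norm_nonneg _

lemma polyNorm_zero : polyNorm n 0 = 0 := by simp [polyNorm]

lemma polyNorm_add_le (f g : MvPolynomial (Fin n ⊕ Fin n) ℂ) :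
    polyNorm n (f + g) ≤ polyNorm n f + polyNorm n g := by
  rw [polyNorm_eq_sum (f + g) (MvPolynomial.support_add),
    polyNorm_eq_sum f Finset.subset_union_left,
    polyNorm_eq_sum g Finset.subset_union_right, ← Finset.sum_add_distrib]
  exact Finset.sum_le_sum fun d _ => by
    simpa [MvPolynomial.coeff_add] using norm_add_le (coeff d f) (coeff d g)

lemma polyNorm_smul (c : ℂ) (f : MvPolynomial (Fin n ⊕ Fin n) ℂ) :
    polyNorm n (c • f) = ‖c‖ * polyNorm n f := by
  rw [polyNorm_eq_sum (c • f) (MvPolynomial.support_smul), polyNorm, Finset.mul_sum]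
  exact Finset.sum_congr rfl fun d _ => by
    rw [MvPolynomial.coeff_smul, smul_eq_mul, norm_mul]

lemma polyNorm_neg (f : MvPolynomial (Fin n ⊕ Fin n) ℂ) :
    polyNorm n (-f) = polyNorm n f := by
  have : (-f) = (-1 : ℂ) • f := by simp
  rw [this, polyNorm_smul]; simp

lemma polyNorm_sub_le (f g : MvPolynomial (Fin n ⊕ Fin n) ℂ) :
    polyNorm n (f - g) ≤ polyNorm n f + polyNorm n g := by
  rw [sub_eq_add_neg]
  exact (polyNorm_add_le f (-g)).trans (by rw [polyNorm_neg])

lemma polyNorm_sum_le {ι : Type*} (S : Finset ι)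
    (F : ι → MvPolynomial (Fin n ⊕ Fin n) ℂ) :
    polyNorm n (∑ i ∈ S, F i) ≤ ∑ i ∈ S, polyNorm n (F i) :=
  Finset.le_sum_of_subadditive (polyNorm n) polyNorm_zero.le polyNorm_add_le S F

lemma polyNorm_monomial_le (d : (Fin n ⊕ Fin n) →₀ ℕ) (c : ℂ) :
    polyNorm n (monomial d c) ≤ ‖c‖ := by
  by_cases hc : c = 0
  · simp [hc, polyNorm_zero]
  · rw [polyNorm, MvPolynomial.support_monomial, if_neg hc]
    simp [MvPolynomial.coeff_monomial]

lemma polyNorm_mul_le (f g : MvPolynomial (Fin n ⊕ Fin n) ℂ) :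
    polyNorm n (f * g) ≤ polyNorm n f * polyNorm n g := by
  classical
  have h1 : polyNorm n (f * g) ≤
      ∑ d ∈ (f * g).support, ∑ p ∈ Finset.HasAntidiagonal.antidiagonal d,
        ‖coeff p.1 f‖ * ‖coeff p.2 g‖ := by
    refine Finset.sum_le_sum fun d _ => ?_
    rw [MvPolynomial.coeff_mul]
    refine (norm_sum_le _ _).trans_eq ?_
    exact Finset.sum_congr rfl fun p _ => norm_mul _ _
  have hdisj : (↑(f * g).support : Set ((Fin n ⊕ Fin n) →₀ ℕ)).PairwiseDisjoint
      (fun d => Finset.HasAntidiagonal.antidiagonal d) := by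
    intro a _ b _ hab
    simp only [Finset.disjoint_left]
    intro p hpa hpb
    exact hab ((Finset.HasAntidiagonal.mem_antidiagonal.mp hpa).symm.trans (Finset.HasAntidiagonal.mem_antidiagonal.mp hpb))
  rw [← Finset.sum_biUnion hdisj] at h1
  refine h1.trans ?_
  set B := (f * g).support.biUnion (fun d => Finset.HasAntidiagonal.antidiagonal d)
  have hfil : ∑ p ∈ B, ‖coeff p.1 f‖ * ‖coeff p.2 g‖ =
      ∑ p ∈ B.filter (fun p => p ∈ f.support ×ˢ g.support),
        ‖coeff p.1 f‖ * ‖coeff p.2 g‖ := by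
    refine (Finset.sum_filter_of_ne fun p _ hne => ?_).symm
    have h1 : coeff p.1 f ≠ 0 := by
      intro h; apply hne; simp [h]
    have h2 : coeff p.2 g ≠ 0 := by
      intro h; apply hne; simp [h]
    simp [Finset.mem_product, MvPolynomial.mem_support_iff, h1, h2]
  rw [hfil]
  have hsub : B.filter (fun p => p ∈ f.support ×ˢ g.support) ⊆ f.support ×ˢ g.support :=
    fun p hp => (Finset.mem_filter.mp hp).2
  refine (Finset.sum_le_sum_of_subset_of_nonneg hsub fun p _ _ =>
    mul_nonneg (norm_nonneg _) (norm_nonneg _)).trans_eq ?_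
  rw [Finset.sum_product, polyNorm, polyNorm, Finset.sum_mul]
  exact Finset.sum_congr rfl fun a _ => by rw [Finset.mul_sum]

lemma polyNorm_pderiv_le (f : MvPolynomial (Fin n ⊕ Fin n) ℂ) (i : Fin n ⊕ Fin n) :
    polyNorm n (pderiv i f) ≤ ∑ d ∈ f.support, ‖coeff d f‖ * (d i : ℝ) := by
  conv_lhs => rw [f.as_sum]
  rw [map_sum]
  refine (polyNorm_sum_le _ _).trans ?_
  refine Finset.sum_le_sum fun d _ => ?_
  rw [pderiv_monomial]
  refine (polyNorm_monomial_le _ _).trans_eq ?_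
  rw [norm_mul, Complex.norm_natCast]

lemma degree_single_one (i : Fin n ⊕ Fin n) : (Finsupp.single i 1).degree = 1 := by
  rw [Finsupp.degree_apply, Finsupp.support_single_ne_zero _ one_ne_zero, Finset.sum_singleton,
    Finsupp.single_eq_same]

lemma degree_add' (a b : (Fin n ⊕ Fin n) →₀ ℕ) : (a + b).degree = a.degree + b.degree := by
  simp only [Finsupp.degree_eq_weight_one]
  exact map_add _ _ _

lemma sum_univ_eq_degree (d : (Fin n ⊕ Fin n) →₀ ℕ) :
    ∑ i : Fin n ⊕ Fin n, d i = d.degree := by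
  rw [Finsupp.degree_apply]
  exact (Finset.sum_subset (Finset.subset_univ _) fun i _ hi =>
    Finsupp.notMem_support_iff.mp hi).symm

lemma sum_polyNorm_pderiv_le {f : MvPolynomial (Fin n ⊕ Fin n) ℂ} {t : ℕ}
    (hf : f.IsHomogeneous t) :
    ∑ i : Fin n ⊕ Fin n, polyNorm n (pderiv i f) ≤ (t : ℝ) * polyNorm n f := by
  calc ∑ i : Fin n ⊕ Fin n, polyNorm n (pderiv i f)
      ≤ ∑ i : Fin n ⊕ Fin n, ∑ d ∈ f.support, ‖coeff d f‖ * (d i : ℝ) :=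
        Finset.sum_le_sum fun i _ => polyNorm_pderiv_le f i
    _ = ∑ d ∈ f.support, ∑ i : Fin n ⊕ Fin n, ‖coeff d f‖ * (d i : ℝ) :=
        Finset.sum_comm
    _ = (t : ℝ) * polyNorm n f := by
        rw [polyNorm, Finset.mul_sum]
        refine Finset.sum_congr rfl fun d hd => ?_
        rw [← Finset.mul_sum]
        have hdeg : d.degree = t := by
          rw [Finsupp.degree_eq_weight_one]
          exact hf (MvPolynomial.mem_support_iff.mp hd)
        rw [← Nat.cast_sum, sum_univ_eq_degree, hdeg, mul_comm]

/-- Linear map version of the Poisson bracket in the first argument. -/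
noncomputable def pbL (n : ℕ) (f : MvPolynomial (Fin n ⊕ Fin n) ℂ) :
    MvPolynomial (Fin n ⊕ Fin n) ℂ →ₗ[ℂ] MvPolynomial (Fin n ⊕ Fin n) ℂ :=
  ∑ j : Fin n,
    ((LinearMap.mulRight ℂ (pderiv (Sum.inl j) f)).comp (pderiv (Sum.inr j)).toLinearMap -
      (LinearMap.mulRight ℂ (pderiv (Sum.inr j) f)).comp (pderiv (Sum.inl j)).toLinearMap)

lemma pbL_apply (f χ : MvPolynomial (Fin n ⊕ Fin n) ℂ) :
    pbL n f χ = poissonBracket n χ f := by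
  simp [pbL, poissonBracket, LinearMap.sum_apply, LinearMap.sub_apply, LinearMap.comp_apply,
    LinearMap.mulRight_apply]

lemma Dconst_nonneg (χ : MvPolynomial (Fin n ⊕ Fin n) ℂ) : 0 ≤ Dconst n χ :=
  Finset.sum_nonneg fun _ _ => mul_nonneg (norm_nonneg _) (Nat.cast_nonneg _)

lemma pb_monomial_le (d : (Fin n ⊕ Fin n) →₀ ℕ) (c : ℂ)
    {f : MvPolynomial (Fin n ⊕ Fin n) ℂ} {t : ℕ} (hf : f.IsHomogeneous t) :
    polyNorm n (poissonBracket n (monomial d c) f) ≤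
      ‖c‖ *
        ((Finset.univ.sup fun j : Fin n => max (d (Sum.inl j)) (d (Sum.inr j)) : ℕ) : ℝ) *
        ((t : ℝ) * polyNorm n f) := by
  set M : ℕ := Finset.univ.sup fun j : Fin n => max (d (Sum.inl j)) (d (Sum.inr j)) with hM
  have hnorm : ∀ i : Fin n ⊕ Fin n,
      polyNorm n (pderiv i (monomial d c)) ≤ ‖c‖ * (M : ℝ) := by
    intro i
    rw [pderiv_monomial]
    refine (polyNorm_monomial_le _ _).trans ?_
    rw [norm_mul, Complex.norm_natCast]
    refine mul_le_mul_of_nonneg_left ?_ (norm_nonneg _)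
    have hdi : d i ≤ M := by
      rw [hM]
      cases i with
      | inl j => exact le_trans (le_max_left (d (Sum.inl j)) (d (Sum.inr j))) (Finset.le_sup (f := fun j : Fin n => max (d (Sum.inl j)) (d (Sum.inr j))) (Finset.mem_univ j))
      | inr j => exact le_trans (le_max_right (d (Sum.inl j)) (d (Sum.inr j))) (Finset.le_sup (f := fun j : Fin n => max (d (Sum.inl j)) (d (Sum.inr j))) (Finset.mem_univ j))
    exact Nat.cast_le.mpr hdi
  calc polyNorm n (poissonBracket n (monomial d c) f)
      ≤ ∑ j : Fin n,
        polyNorm n (pderiv (Sum.inr j) (monomial d c) * pderiv (Sum.inl j) f -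
          pderiv (Sum.inl j) (monomial d c) * pderiv (Sum.inr j) f) :=
        polyNorm_sum_le _ _
    _ ≤ ∑ j : Fin n, (‖c‖ * (M : ℝ) * polyNorm n (pderiv (Sum.inl j) f) +
        ‖c‖ * (M : ℝ) * polyNorm n (pderiv (Sum.inr j) f)) := by
        refine Finset.sum_le_sum fun j _ => ?_
        refine (polyNorm_sub_le _ _).trans ?_
        gcongr
        · exact (polyNorm_mul_le _ _).trans
            (mul_le_mul_of_nonneg_right (hnorm _) (polyNorm_nonneg _))
        · exact (polyNorm_mul_le _ _).trans
            (mul_le_mul_of_nonneg_right (hnorm _) (polyNorm_nonneg _))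
    _ = ‖c‖ * (M : ℝ) * ∑ i : Fin n ⊕ Fin n, polyNorm n (pderiv i f) := by
        rw [Fintype.sum_sum_type, mul_add, Finset.mul_sum, Finset.mul_sum,
          ← Finset.sum_add_distrib]
    _ ≤ ‖c‖ * (M : ℝ) * ((t : ℝ) * polyNorm n f) := by
        refine mul_le_mul_of_nonneg_left (sum_polyNorm_pderiv_le hf) ?_
        exact mul_nonneg (norm_nonneg _) (Nat.cast_nonneg _)

lemma step {χ f : MvPolynomial (Fin n ⊕ Fin n) ℂ} {t : ℕ} (hf : f.IsHomogeneous t) :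
    polyNorm n (poissonBracket n χ f) ≤ Dconst n χ * ((t : ℝ) * polyNorm n f) := by
  rw [← pbL_apply]
  conv_lhs => rw [χ.as_sum, map_sum]
  refine (polyNorm_sum_le _ _).trans ?_
  rw [Dconst, Finset.sum_mul]
  refine Finset.sum_le_sum fun d hd => ?_
  rw [pbL_apply, mul_assoc (‖coeff d χ‖) _ _, ← mul_assoc]
  exact pb_monomial_le d (coeff d χ) hf

lemma pderiv_homog {f : MvPolynomial (Fin n ⊕ Fin n) ℂ} {t : ℕ}
    (hf : f.IsHomogeneous (t + 1)) (i : Fin n ⊕ Fin n) :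
    (pderiv i f).IsHomogeneous t := by
  conv => rw [f.as_sum]
  rw [map_sum]
  refine MvPolynomial.IsHomogeneous.sum _ _ _ fun d hd => ?_
  rw [pderiv_monomial]
  by_cases h0 : d i = 0
  · rw [h0]; simpa using MvPolynomial.isHomogeneous_zero _ _ _
  · refine MvPolynomial.isHomogeneous_monomial _ ?_
    have hle : Finsupp.single i 1 ≤ d := by
      rwa [Finsupp.single_le_iff, Nat.one_le_iff_ne_zero]
    have hcanc : d - Finsupp.single i 1 + Finsupp.single i 1 = d := tsub_add_cancel_of_le hle
    have hdeg : d.degree = t + 1 := by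
      rw [Finsupp.degree_eq_weight_one]
      exact hf (MvPolynomial.mem_support_iff.mp hd)
    have h2 := degree_add' (d - Finsupp.single i 1) (Finsupp.single i 1)
    rw [hcanc, degree_single_one] at h2
    omega

lemma pb_homog {χ f : MvPolynomial (Fin n ⊕ Fin n) ℂ} {a b : ℕ}
    (hχ : χ.IsHomogeneous (a + 1)) (hf : f.IsHomogeneous (b + 1)) :
    (poissonBracket n χ f).IsHomogeneous (a + b) := by
  refine MvPolynomial.IsHomogeneous.sum _ _ _ fun j _ => ?_
  have h1 := (pderiv_homog hχ (Sum.inr j)).mul (pderiv_homog hf (Sum.inl j))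
  have h2 : ((pderiv (Sum.inl j) χ) * (pderiv (Sum.inr j) f)).IsHomogeneous (a + b) :=
    (pderiv_homog hχ (Sum.inl j)).mul (pderiv_homog hf (Sum.inr j))
  rw [← MvPolynomial.mem_homogeneousSubmodule] at h1 h2 ⊢
  exact Submodule.sub_mem _ h1 h2

end Stmt2Aux

open Stmt2Aux in
theorem stmt2 (n : ℕ) (hn : 1 ≤ n) (r s : ℕ)
    (χ g : MvPolynomial (Fin n ⊕ Fin n) ℂ)
    (hχ : χ.IsHomogeneous (r + 2)) (hg : g.IsHomogeneous (s + 2)) :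
    ∀ j : ℕ, 1 ≤ j →
      polyNorm n (((j.factorial : ℂ)⁻¹) • (poissonBracket n χ)^[j] g) ≤
        ((∏ i ∈ Finset.range j, ((s : ℝ) + (i : ℝ) * (r : ℝ) + 2)) / (j.factorial : ℝ)) *
          (Dconst n χ) ^ j * polyNorm n g := by
  have key : ∀ m : ℕ, ((poissonBracket n χ)^[m] g).IsHomogeneous (s + m * r + 2) ∧
      polyNorm n ((poissonBracket n χ)^[m] g) ≤
        (∏ i ∈ Finset.range m, ((s : ℝ) + (i : ℝ) * (r : ℝ) + 2)) * Dconst n χ ^ m *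
          polyNorm n g := by
    intro m
    induction m with
    | zero => exact ⟨by simpa using hg, by simp⟩
    | succ m ih =>
      obtain ⟨ihh, ihn⟩ := ih
      have hhom : ((poissonBracket n χ)^[m + 1] g).IsHomogeneous (s + (m + 1) * r + 2) := by
        rw [Function.iterate_succ_apply']
        have h1 : χ.IsHomogeneous ((r + 1) + 1) := by
          have : r + 2 = (r + 1) + 1 := by omega
          rwa [this] at hχ
        have h2 : ((poissonBracket n χ)^[m] g).IsHomogeneous ((s + m * r + 1) + 1) := by
          have : s + m * r + 2 = (s + m * r + 1) + 1 := by omega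
          rwa [this] at ihh
        have := pb_homog h1 h2
        have heq : (r + 1) + (s + m * r + 1) = s + (m + 1) * r + 2 := by ring
        rwa [heq] at this
      refine ⟨hhom, ?_⟩
      rw [Function.iterate_succ_apply']
      calc polyNorm n (poissonBracket n χ ((poissonBracket n χ)^[m] g))
          ≤ Dconst n χ * (((s + m * r + 2 : ℕ) : ℝ) *
            polyNorm n ((poissonBracket n χ)^[m] g)) := step ihh
        _ ≤ Dconst n χ * (((s + m * r + 2 : ℕ) : ℝ) *
            ((∏ i ∈ Finset.range m, ((s : ℝ) + (i : ℝ) * (r : ℝ) + 2)) * Dconst n χ ^ m *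
              polyNorm n g)) := by
            refine mul_le_mul_of_nonneg_left ?_ (Dconst_nonneg χ)
            exact mul_le_mul_of_nonneg_left ihn (by positivity)
        _ = (∏ i ∈ Finset.range (m + 1), ((s : ℝ) + (i : ℝ) * (r : ℝ) + 2)) *
            Dconst n χ ^ (m + 1) * polyNorm n g := by
            rw [Finset.prod_range_succ]
            push_cast
            ring
  intro j _
  obtain ⟨_, hnorm⟩ := key j
  rw [polyNorm_smul, norm_inv, Complex.norm_natCast]
  have hfac : (0 : ℝ) < (j.factorial : ℝ) := by
    exact_mod_cast j.factorial_pos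
  calc ((j.factorial : ℝ))⁻¹ * polyNorm n ((poissonBracket n χ)^[j] g)
      ≤ ((j.factorial : ℝ))⁻¹ *
        ((∏ i ∈ Finset.range j, ((s : ℝ) + (i : ℝ) * (r : ℝ) + 2)) * Dconst n χ ^ j *
          polyNorm n g) := by
        exact mul_le_mul_of_nonneg_left hnorm (by positivity)
    _ = ((∏ i ∈ Finset.range j, ((s : ℝ) + (i : ℝ) * (r : ℝ) + 2)) / (j.factorial : ℝ)) *
        Dconst n χ ^ j * polyNorm n g := by
        rw [div_eq_mul_inv]
        ring
end

section
/- Let χ ∈ P_{r+2} be a homogeneous polynomial with expansion χ = Σ_{|k|+|k̃|=r+2} c_{k,k̃} u^k v^k̃ and set D = Σ_{k,k̃} |c_{k,k̃}| · max_{1≤j≤n} max(k_j, k̃_j). Then D ≤ (r+2)·‖χ‖, and consequently, for every g ∈ P_{s+2} and every integer j ≥ 1, ‖(1/j!) L_χ^j g‖ ≤ (∏_{i=0}^{j−1}(s+ir+2) / j!) · ((r+2)‖χ‖)^j · ‖g‖. -/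
open MvPolynomial

namespace Stmt3Aux

variable {n : ℕ}

/-- Sum over any superset of the support computes `polyNorm`. -/
lemma polyNorm_eq_sum {f : MvPolynomial (Fin n ⊕ Fin n) ℂ}
    {T : Finset ((Fin n ⊕ Fin n) →₀ ℕ)} (h : f.support ⊆ T) :
    polyNorm n f = ∑ d ∈ T, ‖coeff d f‖ := by
  refine Finset.sum_subset h ?_
  intro d _ hd
  rw [notMem_support_iff] at hd
  simp [hd]

lemma polyNorm_nonneg (f : MvPolynomial (Fin n ⊕ Fin n) ℂ) : 0 ≤ polyNorm n f :=
  Finset.sum_nonneg fun _ _ => norm_nonneg _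

lemma polyNorm_zero : polyNorm n 0 = 0 := by simp [polyNorm]

lemma polyNorm_add_le (f g : MvPolynomial (Fin n ⊕ Fin n) ℂ) :
    polyNorm n (f + g) ≤ polyNorm n f + polyNorm n g := by
  rw [polyNorm_eq_sum (T := f.support ∪ g.support) support_add,
    polyNorm_eq_sum (T := f.support ∪ g.support) (Finset.subset_union_left),
    polyNorm_eq_sum (T := f.support ∪ g.support) (Finset.subset_union_right),
    ← Finset.sum_add_distrib]
  refine Finset.sum_le_sum fun d _ => ?_
  simpa [coeff_add] using norm_add_le _ _

lemma polyNorm_sum_le {α : Type*} (S : Finset α) (f : α → MvPolynomial (Fin n ⊕ Fin n) ℂ) :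
    polyNorm n (∑ i ∈ S, f i) ≤ ∑ i ∈ S, polyNorm n (f i) := by
  classical
  induction S using Finset.induction_on with
  | empty => simp [polyNorm_zero]
  | insert _ _ hx ih =>
    rename_i a s
    rw [Finset.sum_insert hx, Finset.sum_insert hx]
    exact (polyNorm_add_le _ _).trans (by linarith)

lemma polyNorm_monomial (d : (Fin n ⊕ Fin n) →₀ ℕ) (c : ℂ) :
    polyNorm n (monomial d c) = ‖c‖ := by
  by_cases hc : c = 0
  · simp [hc, polyNorm]
  · simp [polyNorm, support_monomial, hc]

lemma polyNorm_smul (c : ℂ) (f : MvPolynomial (Fin n ⊕ Fin n) ℂ) :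
    polyNorm n (c • f) = ‖c‖ * polyNorm n f := by
  rw [polyNorm_eq_sum (T := f.support) support_smul, polyNorm, Finset.mul_sum]
  refine Finset.sum_congr rfl fun d _ => ?_
  simp [smul_eq_C_mul, coeff_C_mul, norm_mul]

lemma degree_eq_sum (d : (Fin n ⊕ Fin n) →₀ ℕ) : d.degree = ∑ i, d i := by
  refine Finset.sum_subset (Finset.subset_univ _) ?_
  intro x _ hx
  simpa [Finsupp.notMem_support_iff] using hx

lemma degree_sub_single {σ : Type*} [Fintype σ] [DecidableEq σ] (d : σ →₀ ℕ) (i : σ)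
    (hi : d i ≠ 0) : (d - Finsupp.single i 1).degree = d.degree - 1 := by
  have hsum : ∀ e : σ →₀ ℕ, e.degree = ∑ x, e x := by
    intro e
    refine Finset.sum_subset (Finset.subset_univ _) ?_
    intro x _ hx
    simpa [Finsupp.notMem_support_iff] using hx
  rw [hsum, hsum]
  have happ : ∀ x : σ, (d - Finsupp.single i 1 : σ →₀ ℕ) x = d x - Finsupp.single i 1 x :=
    fun x => Finsupp.tsub_apply d (Finsupp.single i 1) x
  simp only [happ]
  rw [← Finset.sum_erase_add _ _ (Finset.mem_univ i), ← Finset.sum_erase_add _ (fun x => d x)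
    (Finset.mem_univ i)]
  have h1 : ∑ x ∈ Finset.univ.erase i, (d x - Finsupp.single i 1 x)
      = ∑ x ∈ Finset.univ.erase i, d x := by
    refine Finset.sum_congr rfl fun x hx => ?_
    rw [Finsupp.single_apply, if_neg (Finset.ne_of_mem_erase hx).symm]
    omega
  rw [h1, Finsupp.single_apply, if_pos rfl]
  omega

lemma pderiv_isHomogeneous {φ : MvPolynomial (Fin n ⊕ Fin n) ℂ} {m : ℕ}
    (h : φ.IsHomogeneous m) (i : Fin n ⊕ Fin n) :
    (pderiv i φ).IsHomogeneous (m - 1) := by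
  classical
  conv_lhs => rw [φ.as_sum]
  rw [map_sum]
  refine IsHomogeneous.sum _ _ _ fun d hd => ?_
  rw [pderiv_monomial]
  by_cases hz : (coeff d φ * (d i : ℂ)) = 0
  · rw [hz, map_zero]
    exact isHomogeneous_zero _ _ _
  · have hc : coeff d φ ≠ 0 := fun hh => hz (by simp [hh])
    have hdi : d i ≠ 0 := by
      intro hh
      exact hz (by simp [hh])
    have hdeg : d.degree = m := by
      have := h hc
      rwa [show (1 : (Fin n ⊕ Fin n) → ℕ) = fun _ => 1 from rfl, ← Finsupp.degree_eq_weight_one] at this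
    exact isHomogeneous_monomial _ (by rw [degree_sub_single d i hdi, hdeg])

lemma bracket_isHomogeneous {χ g : MvPolynomial (Fin n ⊕ Fin n) ℂ} {r m : ℕ}
    (hχ : χ.IsHomogeneous (r + 2)) (hg : g.IsHomogeneous (m + 2)) :
    (poissonBracket n χ g).IsHomogeneous (m + r + 2) := by
  refine IsHomogeneous.sum _ _ _ fun j _ => ?_
  have e1 : (r + 2 - 1) + (m + 2 - 1) = m + r + 2 := by omega
  have h1 := (pderiv_isHomogeneous hχ (Sum.inr j)).mul (pderiv_isHomogeneous hg (Sum.inl j))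
  have h2 := (pderiv_isHomogeneous hχ (Sum.inl j)).mul (pderiv_isHomogeneous hg (Sum.inr j))
  rw [e1] at h1 h2
  exact h1.sub h2

lemma pb_sum_left {α : Type*} (S : Finset α) (f : α → MvPolynomial (Fin n ⊕ Fin n) ℂ)
    (g : MvPolynomial (Fin n ⊕ Fin n) ℂ) :
    poissonBracket n (∑ i ∈ S, f i) g = ∑ i ∈ S, poissonBracket n (f i) g := by
  unfold poissonBracket
  rw [Finset.sum_comm]
  refine Finset.sum_congr rfl fun j _ => ?_
  simp [map_sum, Finset.sum_mul, Finset.sum_sub_distrib]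

lemma pb_sum_right {α : Type*} (S : Finset α) (f : α → MvPolynomial (Fin n ⊕ Fin n) ℂ)
    (g : MvPolynomial (Fin n ⊕ Fin n) ℂ) :
    poissonBracket n g (∑ i ∈ S, f i) = ∑ i ∈ S, poissonBracket n g (f i) := by
  unfold poissonBracket
  rw [Finset.sum_comm]
  refine Finset.sum_congr rfl fun j _ => ?_
  simp [map_sum, Finset.mul_sum, Finset.sum_sub_distrib]

/-- `M d = max_j max (d (inl j)) (d (inr j))`. -/
def Md (d : (Fin n ⊕ Fin n) →₀ ℕ) : ℕ :=
  Finset.univ.sup fun j : Fin n => max (d (Sum.inl j)) (d (Sum.inr j))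

lemma key_nat (d e : (Fin n ⊕ Fin n) →₀ ℕ) :
    ∑ j : Fin n, (d (Sum.inr j) * e (Sum.inl j) + d (Sum.inl j) * e (Sum.inr j))
      ≤ Md d * ∑ i, e i := by
  have : ∑ i, e i = ∑ j : Fin n, (e (Sum.inl j) + e (Sum.inr j)) := by
    rw [Fintype.sum_sum_type, ← Finset.sum_add_distrib]
  rw [this, Finset.mul_sum]
  refine Finset.sum_le_sum fun j _ => ?_
  have h1 : d (Sum.inr j) ≤ Md d :=
    le_trans (le_max_right _ _)
      (Finset.le_sup (f := fun j : Fin n => max (d (Sum.inl j)) (d (Sum.inr j)))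
        (Finset.mem_univ j))
  have h2 : d (Sum.inl j) ≤ Md d :=
    le_trans (le_max_left _ _)
      (Finset.le_sup (f := fun j : Fin n => max (d (Sum.inl j)) (d (Sum.inr j)))
        (Finset.mem_univ j))
  calc d (Sum.inr j) * e (Sum.inl j) + d (Sum.inl j) * e (Sum.inr j)
      ≤ Md d * e (Sum.inl j) + Md d * e (Sum.inr j) := by
        exact Nat.add_le_add (Nat.mul_le_mul_right _ h1) (Nat.mul_le_mul_right _ h2)
    _ = Md d * (e (Sum.inl j) + e (Sum.inr j)) := by ring

lemma bracket_monomial_le (d e : (Fin n ⊕ Fin n) →₀ ℕ) (c b : ℂ) :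
    polyNorm n (poissonBracket n (monomial d c) (monomial e b))
      ≤ ‖c‖ * ‖b‖ * ((Md d : ℝ) * (∑ i, e i : ℕ)) := by
  unfold poissonBracket
  refine le_trans (polyNorm_sum_le _ _) ?_
  have hterm : ∀ j : Fin n,
      polyNorm n (pderiv (Sum.inr j) (monomial d c) * pderiv (Sum.inl j) (monomial e b) -
        pderiv (Sum.inl j) (monomial d c) * pderiv (Sum.inr j) (monomial e b))
      ≤ ‖c‖ * ‖b‖ *
        ((d (Sum.inr j) * e (Sum.inl j) + d (Sum.inl j) * e (Sum.inr j) : ℕ) : ℝ) := by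
    intro j
    rw [pderiv_monomial, pderiv_monomial, pderiv_monomial, pderiv_monomial,
      monomial_mul, monomial_mul, sub_eq_add_neg, ← map_neg]
    refine le_trans (polyNorm_add_le _ _) ?_
    rw [polyNorm_monomial, polyNorm_monomial, norm_neg]
    simp only [norm_mul, Complex.norm_natCast]
    push_cast
    ring_nf
    nlinarith [norm_nonneg c, norm_nonneg b]
  refine le_trans (Finset.sum_le_sum fun j _ => hterm j) ?_
  rw [← Finset.mul_sum, ← Nat.cast_sum]
  have := key_nat d e
  have hcast : ((∑ j : Fin n, (d (Sum.inr j) * e (Sum.inl j) + d (Sum.inl j) * e (Sum.inr j)) : ℕ) : ℝ)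
      ≤ ((Md d * ∑ i, e i : ℕ) : ℝ) := Nat.cast_le.mpr this
  have hnn : 0 ≤ ‖c‖ * ‖b‖ :=
    mul_nonneg (norm_nonneg _) (norm_nonneg _)
  calc ‖c‖ * ‖b‖ *
        ((∑ j : Fin n, (d (Sum.inr j) * e (Sum.inl j) + d (Sum.inl j) * e (Sum.inr j)) : ℕ) : ℝ)
      ≤ ‖c‖ * ‖b‖ * ((Md d * ∑ i, e i : ℕ) : ℝ) := by
        exact mul_le_mul_of_nonneg_left hcast hnn
    _ = ‖c‖ * ‖b‖ * ((Md d : ℝ) * (∑ i, e i : ℕ)) := by push_cast; ring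

lemma bracket_norm_le {χ g : MvPolynomial (Fin n ⊕ Fin n) ℂ} {m : ℕ}
    (hg : g.IsHomogeneous m) :
    polyNorm n (poissonBracket n χ g) ≤ (m : ℝ) * Dconst n χ * polyNorm n g := by
  classical
  conv_lhs => rw [χ.as_sum, g.as_sum, pb_sum_left]
  refine le_trans (polyNorm_sum_le _ _) ?_
  have hinner : ∀ d ∈ χ.support,
      polyNorm n (poissonBracket n (monomial d (coeff d χ)) (∑ e ∈ g.support, monomial e (coeff e g)))
      ≤ ‖coeff d χ‖ * (Md d : ℝ) * ((m : ℝ) * polyNorm n g) := by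
    intro d _
    rw [pb_sum_right]
    refine le_trans (polyNorm_sum_le _ _) ?_
    have hper : ∀ e ∈ g.support,
        polyNorm n (poissonBracket n (monomial d (coeff d χ)) (monomial e (coeff e g)))
        ≤ ‖coeff d χ‖ * (Md d : ℝ) * ((m : ℝ) * ‖coeff e g‖) := by
      intro e he
      have hdeg : (∑ i, e i : ℕ) = m := by
        have hc : coeff e g ≠ 0 := mem_support_iff.mp he
        have := hg hc
        rw [show (1 : (Fin n ⊕ Fin n) → ℕ) = fun _ => 1 from rfl, ← Finsupp.degree_eq_weight_one] at this
        rw [← degree_eq_sum]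
        exact this
      refine le_trans (bracket_monomial_le d e _ _) ?_
      rw [hdeg]
      exact le_of_eq (by push_cast; ring)
    refine le_trans (Finset.sum_le_sum hper) ?_
    rw [← Finset.mul_sum, ← Finset.mul_sum, polyNorm]
  refine le_trans (Finset.sum_le_sum hinner) ?_
  rw [Dconst, Finset.mul_sum, Finset.sum_mul]
  refine le_of_eq (Finset.sum_congr rfl fun d _ => ?_)
  simp only [Md]
  ring

lemma dconst_nonneg (χ : MvPolynomial (Fin n ⊕ Fin n) ℂ) : 0 ≤ Dconst n χ :=
  Finset.sum_nonneg fun _ _ => mul_nonneg (norm_nonneg _) (Nat.cast_nonneg _)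

lemma iter_bound {χ : MvPolynomial (Fin n ⊕ Fin n) ℂ} {r : ℕ}
    (hχ : χ.IsHomogeneous (r + 2)) (s : ℕ) (g : MvPolynomial (Fin n ⊕ Fin n) ℂ)
    (hg : g.IsHomogeneous (s + 2)) (j : ℕ) :
    ((poissonBracket n χ)^[j] g).IsHomogeneous (s + j * r + 2) ∧
      polyNorm n ((poissonBracket n χ)^[j] g) ≤
        (∏ i ∈ Finset.range j, ((s : ℝ) + (i : ℝ) * (r : ℝ) + 2)) * (Dconst n χ) ^ j *
          polyNorm n g := by
  induction j with
  | zero => simpa using hg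
  | succ j ih =>
    obtain ⟨ih1, ih2⟩ := ih
    rw [Function.iterate_succ_apply']
    constructor
    · have h := bracket_isHomogeneous (m := s + j * r) hχ ih1
      have e : s + j * r + r + 2 = s + (j + 1) * r + 2 := by ring
      rwa [e] at h
    · have hb := bracket_norm_le (χ := χ) (m := s + j * r + 2) ih1
      refine le_trans hb ?_
      rw [Finset.prod_range_succ, pow_succ]
      have hfac : 0 ≤ ((s : ℝ) + (j : ℝ) * (r : ℝ) + 2) := by positivity
      have hcast : ((s + j * r + 2 : ℕ) : ℝ) = (s : ℝ) + (j : ℝ) * (r : ℝ) + 2 := by push_cast; ring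
      rw [hcast]
      calc ((s : ℝ) + (j : ℝ) * (r : ℝ) + 2) * Dconst n χ * polyNorm n ((poissonBracket n χ)^[j] g)
          ≤ ((s : ℝ) + (j : ℝ) * (r : ℝ) + 2) * Dconst n χ *
            ((∏ i ∈ Finset.range j, ((s : ℝ) + (i : ℝ) * (r : ℝ) + 2)) * (Dconst n χ) ^ j *
              polyNorm n g) := by
            refine mul_le_mul_of_nonneg_left ih2 ?_
            exact mul_nonneg hfac (dconst_nonneg χ)
        _ = (∏ i ∈ Finset.range j, ((s : ℝ) + (i : ℝ) * (r : ℝ) + 2)) *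
              ((s : ℝ) + (j : ℝ) * (r : ℝ) + 2) * ((Dconst n χ) ^ j * Dconst n χ) *
              polyNorm n g := by ring

end Stmt3Aux

open Stmt3Aux in
theorem stmt3 (n : ℕ) (hn : 1 ≤ n) (r : ℕ)
    (χ : MvPolynomial (Fin n ⊕ Fin n) ℂ) (hχ : χ.IsHomogeneous (r + 2)) :
    Dconst n χ ≤ ((r : ℝ) + 2) * polyNorm n χ ∧
      ∀ s : ℕ, ∀ g : MvPolynomial (Fin n ⊕ Fin n) ℂ, g.IsHomogeneous (s + 2) →
        ∀ j : ℕ, 1 ≤ j →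
          polyNorm n (((j.factorial : ℂ)⁻¹) • (poissonBracket n χ)^[j] g) ≤
            ((∏ i ∈ Finset.range j, ((s : ℝ) + (i : ℝ) * (r : ℝ) + 2)) / (j.factorial : ℝ)) *
              (((r : ℝ) + 2) * polyNorm n χ) ^ j * polyNorm n g := by
  have hD : Dconst n χ ≤ ((r : ℝ) + 2) * polyNorm n χ := by
    rw [Dconst, polyNorm, Finset.mul_sum]
    refine Finset.sum_le_sum fun d hd => ?_
    rw [mul_comm (((r : ℝ) + 2)) _]
    refine mul_le_mul_of_nonneg_left ?_ (norm_nonneg _)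
    have hdeg : (∑ i, d i : ℕ) = r + 2 := by
      have hc : coeff d χ ≠ 0 := mem_support_iff.mp hd
      have := hχ hc
      rw [show (1 : (Fin n ⊕ Fin n) → ℕ) = fun _ => 1 from rfl, ← Finsupp.degree_eq_weight_one] at this
      rw [← degree_eq_sum]
      exact this
    have hM : (Md d : ℕ) ≤ r + 2 := by
      refine Finset.sup_le fun j _ => ?_
      have h1 : d (Sum.inl j) ≤ ∑ i, d i :=
        Finset.single_le_sum (fun i _ => Nat.zero_le _) (Finset.mem_univ _)
      have h2 : d (Sum.inr j) ≤ ∑ i, d i :=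
        Finset.single_le_sum (fun i _ => Nat.zero_le _) (Finset.mem_univ _)
      omega
    exact_mod_cast hM
  refine ⟨hD, ?_⟩
  intro s g hg j hj
  obtain ⟨_, hbound⟩ := iter_bound hχ s g hg j
  rw [polyNorm_smul]
  have habs : ‖(j.factorial : ℂ)⁻¹‖ = ((j.factorial : ℝ))⁻¹ := by
    rw [norm_inv, Complex.norm_natCast]
  rw [habs]
  have hfacpos : (0 : ℝ) < (j.factorial : ℝ) := by positivity
  have hDj : (Dconst n χ) ^ j ≤ (((r : ℝ) + 2) * polyNorm n χ) ^ j :=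
    pow_le_pow_left₀ (dconst_nonneg χ) hD j
  have hprod : 0 ≤ ∏ i ∈ Finset.range j, ((s : ℝ) + (i : ℝ) * (r : ℝ) + 2) :=
    Finset.prod_nonneg fun i _ => by positivity
  have hg0 : 0 ≤ polyNorm n g := polyNorm_nonneg g
  calc ((j.factorial : ℝ))⁻¹ * polyNorm n ((poissonBracket n χ)^[j] g)
      ≤ ((j.factorial : ℝ))⁻¹ *
        ((∏ i ∈ Finset.range j, ((s : ℝ) + (i : ℝ) * (r : ℝ) + 2)) * (Dconst n χ) ^ j *
          polyNorm n g) := by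
        exact mul_le_mul_of_nonneg_left hbound (by positivity)
    _ ≤ ((j.factorial : ℝ))⁻¹ *
        ((∏ i ∈ Finset.range j, ((s : ℝ) + (i : ℝ) * (r : ℝ) + 2)) *
          (((r : ℝ) + 2) * polyNorm n χ) ^ j * polyNorm n g) := by
        refine mul_le_mul_of_nonneg_left ?_ (by positivity)
        exact mul_le_mul_of_nonneg_right (mul_le_mul_of_nonneg_left hDj hprod) hg0
    _ = ((∏ i ∈ Finset.range j, ((s : ℝ) + (i : ℝ) * (r : ℝ) + 2)) / (j.factorial : ℝ)) *
          (((r : ℝ) + 2) * polyNorm n χ) ^ j * polyNorm n g := by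
        field_simp
        simp_rw [mul_comm (r : ℝ) _]
        ring
end

section
/- Let ω ∈ ℝⁿ satisfy ω·(ℓ−ℓ̃) ≠ 0 for all multi-indices ℓ, ℓ̃ ∈ ℕⁿ with ℓ ≠ ℓ̃ and |ℓ|+|ℓ̃| = r+2. Let Z₀ = Σ_{j=1}^n i ω_j u_j v_j and let f = Σ_{|ℓ|+|ℓ̃|=r+2} c_{ℓ,ℓ̃} u^ℓ v^ℓ̃ ∈ P_{r+2}. Define the generating function χ = Σ_{|ℓ|+|ℓ̃|=r+2, ℓ≠ℓ̃} (c_{ℓ,ℓ̃} / (i ω·(ℓ−ℓ̃))) u^ℓ v^ℓ̃ and the normal-form term Z = Σ_{2|ℓ|=r+2} c_{ℓ,ℓ} u^ℓ v^ℓ. Then χ solves the homological equation L_χ Z₀ + f = Z. -/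
open MvPolynomial

/-- The quadratic Hamiltonian `Z₀ = ∑_j i ω_j u_j v_j` of `n` harmonic oscillators. -/
noncomputable def oscHam (n : ℕ) (ω : Fin n → ℝ) : MvPolynomial (Fin n ⊕ Fin n) ℂ :=
  ∑ j : Fin n, C (Complex.I * (ω j : ℂ)) * (X (Sum.inl j) * X (Sum.inr j))

open Classical in
/-- The generating function `χ = ∑_{ℓ≠ℓ̃} (c_{ℓ,ℓ̃} / (i ω·(ℓ−ℓ̃))) u^ℓ v^ℓ̃` built from
the off-diagonal monomials of `f` (for a monomial exponent `d`, `ℓ_j = d (inl j)` and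
`ℓ̃_j = d (inr j)`). -/
noncomputable def genFun (n : ℕ) (ω : Fin n → ℝ) (f : MvPolynomial (Fin n ⊕ Fin n) ℂ) :
    MvPolynomial (Fin n ⊕ Fin n) ℂ :=
  ∑ d ∈ f.support.filter fun d => ∃ j : Fin n, d (Sum.inl j) ≠ d (Sum.inr j),
    monomial d
      (coeff d f /
        (Complex.I *
          ((∑ j : Fin n, ω j * ((d (Sum.inl j) : ℝ) - (d (Sum.inr j) : ℝ)) : ℝ) : ℂ)))

open Classical in
/-- The normal-form part `Z = ∑_{ℓ} c_{ℓ,ℓ} u^ℓ v^ℓ` of `f`: the sum of the monomials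
of `f` with equal exponents on the `u` and `v` variables. -/
noncomputable def normalPart (n : ℕ) (f : MvPolynomial (Fin n ⊕ Fin n) ℂ) :
    MvPolynomial (Fin n ⊕ Fin n) ℂ :=
  ∑ d ∈ f.support.filter fun d => ∀ j : Fin n, d (Sum.inl j) = d (Sum.inr j),
    monomial d (coeff d f)

lemma pderiv_monomial_mul_X {σ : Type*} [DecidableEq σ] (d : σ →₀ ℕ) (c : ℂ) (i : σ) :
    pderiv i (monomial d c) * X i = monomial d (c * (d i : ℂ)) := by
  rw [pderiv_monomial, X, monomial_mul, mul_one]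
  by_cases h : d i = 0
  · simp [h]
  · congr 1
    rw [tsub_add_cancel_of_le]
    exact Finsupp.single_le_iff.mpr (Nat.one_le_iff_ne_zero.mpr h)

lemma pderiv_oscHam_inl (n : ℕ) (ω : Fin n → ℝ) (j : Fin n) :
    pderiv (Sum.inl j) (oscHam n ω) = C (Complex.I * (ω j : ℂ)) * X (Sum.inr j) := by
  classical
  unfold oscHam
  rw [map_sum, Finset.sum_eq_single j]
  · simp [pderiv_C_mul, pderiv_X, Pi.single_apply]
  · intro k _ hk
    simp [pderiv_C_mul, pderiv_X, Pi.single_apply, hk, (Ne.symm hk : j ≠ k)]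
  · simp

lemma pderiv_oscHam_inr (n : ℕ) (ω : Fin n → ℝ) (j : Fin n) :
    pderiv (Sum.inr j) (oscHam n ω) = C (Complex.I * (ω j : ℂ)) * X (Sum.inl j) := by
  classical
  unfold oscHam
  rw [map_sum, Finset.sum_eq_single j]
  · simp [pderiv_C_mul, pderiv_X, Pi.single_apply]
  · intro k _ hk
    simp [pderiv_C_mul, pderiv_X, Pi.single_apply, hk, (Ne.symm hk : j ≠ k)]
  · simp

lemma bracket_monomial (n : ℕ) (ω : Fin n → ℝ) (d : Fin n ⊕ Fin n →₀ ℕ) (c : ℂ) :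
    poissonBracket n (monomial d c) (oscHam n ω) =
      monomial d (c * (Complex.I *
        ∑ j : Fin n, (ω j : ℂ) * ((d (Sum.inr j) : ℂ) - (d (Sum.inl j) : ℂ)))) := by
  classical
  unfold poissonBracket
  have step : ∀ j : Fin n,
      pderiv (Sum.inr j) (monomial d c) * pderiv (Sum.inl j) (oscHam n ω) -
        pderiv (Sum.inl j) (monomial d c) * pderiv (Sum.inr j) (oscHam n ω) =
      monomial d (c * (Complex.I * (ω j : ℂ) *
        ((d (Sum.inr j) : ℂ) - (d (Sum.inl j) : ℂ)))) := by
    intro j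
    rw [pderiv_oscHam_inl, pderiv_oscHam_inr]
    have h1 : pderiv (Sum.inr j) (monomial d c) *
        (C (Complex.I * (ω j : ℂ)) * X (Sum.inr j)) =
        monomial d (Complex.I * (ω j : ℂ) * (c * (d (Sum.inr j) : ℂ))) := by
      rw [mul_comm (C (Complex.I * (ω j : ℂ))) (X (Sum.inr j)), ← mul_assoc,
        pderiv_monomial_mul_X, mul_comm, C_mul_monomial]
    have h2 : pderiv (Sum.inl j) (monomial d c) *
        (C (Complex.I * (ω j : ℂ)) * X (Sum.inl j)) =
        monomial d (Complex.I * (ω j : ℂ) * (c * (d (Sum.inl j) : ℂ))) := by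
      rw [mul_comm (C (Complex.I * (ω j : ℂ))) (X (Sum.inl j)), ← mul_assoc,
        pderiv_monomial_mul_X, mul_comm, C_mul_monomial]
    rw [h1, h2, ← map_sub]
    congr 1
    ring
  rw [Finset.sum_congr rfl fun j _ => step j, ← map_sum (monomial d)]
  congr 1
  rw [Finset.mul_sum, Finset.mul_sum]
  exact Finset.sum_congr rfl fun j _ => by ring

lemma bracket_sum (n : ℕ) {α : Type*} (s : Finset α)
    (F : α → MvPolynomial (Fin n ⊕ Fin n) ℂ) (g : MvPolynomial (Fin n ⊕ Fin n) ℂ) :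
    poissonBracket n (∑ d ∈ s, F d) g = ∑ d ∈ s, poissonBracket n (F d) g := by
  unfold poissonBracket
  simp only [map_sum, Finset.sum_mul, ← Finset.sum_sub_distrib]
  exact Finset.sum_comm

theorem stmt5 (n : ℕ) (hn : 1 ≤ n) (r : ℕ) (ω : Fin n → ℝ)
    (hω : ∀ ℓ ℓt : Fin n → ℕ, ℓ ≠ ℓt → (∑ j : Fin n, (ℓ j + ℓt j)) = r + 2 →
      (∑ j : Fin n, ω j * ((ℓ j : ℝ) - (ℓt j : ℝ))) ≠ 0)
    (f : MvPolynomial (Fin n ⊕ Fin n) ℂ) (hf : f.IsHomogeneous (r + 2)) :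
    poissonBracket n (genFun n ω f) (oscHam n ω) + f = normalPart n f := by
  classical
  set off : Finset (Fin n ⊕ Fin n →₀ ℕ) :=
    f.support.filter fun d => ∃ j : Fin n, d (Sum.inl j) ≠ d (Sum.inr j) with hoff
  have key : poissonBracket n (genFun n ω f) (oscHam n ω) =
      ∑ d ∈ off, monomial d (-(coeff d f)) := by
    rw [genFun, bracket_sum]
    refine Finset.sum_congr rfl fun d hd => ?_
    rw [bracket_monomial]
    congr 1
    -- coefficient computation
    have hd' := Finset.mem_filter.mp hd
    have hdeg : ∑ j : Fin n, (d (Sum.inl j) + d (Sum.inr j)) = r + 2 := by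
      have h := hf (MvPolynomial.mem_support_iff.mp hd'.1)
      rw [Finsupp.weight_apply, Finsupp.sum_fintype] at h
      · rw [← h]
        simp [Fintype.sum_sum_type, Finset.sum_add_distrib]
      · intro; simp
    have hne : (fun j => d (Sum.inl j)) ≠ fun j => d (Sum.inr j) := by
      obtain ⟨j, hj⟩ := hd'.2
      intro hcontra
      exact hj (congrFun hcontra j)
    have hS : (∑ j : Fin n, ω j * ((d (Sum.inl j) : ℝ) - (d (Sum.inr j) : ℝ))) ≠ 0 :=
      hω _ _ hne hdeg
    set S : ℝ := ∑ j : Fin n, ω j * ((d (Sum.inl j) : ℝ) - (d (Sum.inr j) : ℝ)) with hSdef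
    have hT : (∑ j : Fin n, (ω j : ℂ) * ((d (Sum.inr j) : ℂ) - (d (Sum.inl j) : ℂ)))
        = -(S : ℂ) := by
      rw [hSdef]
      push_cast
      rw [← Finset.sum_neg_distrib]
      exact Finset.sum_congr rfl fun j _ => by ring
    rw [hT]
    have hIS : Complex.I * (S : ℂ) ≠ 0 :=
      mul_ne_zero Complex.I_ne_zero (Complex.ofReal_ne_zero.mpr hS)
    field_simp
    rw [mul_div_cancel_right₀ _ (Complex.ofReal_ne_zero.mpr hS)]
  have hoff' : f.support.filter
      (fun d => ¬ ∀ j : Fin n, d (Sum.inl j) = d (Sum.inr j)) = off := by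
    rw [hoff]
    exact Finset.filter_congr fun d _ => by push_neg; rfl
  have hneg : (∑ d ∈ off, monomial d (-(coeff d f)))
      = -(∑ d ∈ off, monomial d (coeff d f)) := by
    simp only [map_neg]
    exact Finset.sum_neg_distrib _
  have hsplit : normalPart n f + (∑ d ∈ off, monomial d (coeff d f)) = f := by
    rw [normalPart]
    conv_rhs => rw [f.as_sum]
    rw [← Finset.sum_filter_add_sum_filter_not f.support
      (fun d => ∀ j : Fin n, d (Sum.inl j) = d (Sum.inr j)), hoff']
  rw [key, hneg]
  linear_combination -hsplit
end

section
/- In the setting of the homological equation: let ω ∈ ℝⁿ satisfy ω·(ℓ−ℓ̃) ≠ 0 for all multi-indices ℓ ≠ ℓ̃ with |ℓ|+|ℓ̃| = r+2, let f = Σ_{|ℓ|+|ℓ̃|=r+2} c_{ℓ,ℓ̃} u^ℓ v^ℓ̃ ∈ P_{r+2}, let χ = Σ_{ℓ≠ℓ̃} (c_{ℓ,ℓ̃} / (i ω·(ℓ−ℓ̃))) u^ℓ v^ℓ̃ and Z = Σ_{2|ℓ|=r+2} c_{ℓ,ℓ} u^ℓ v^ℓ, and let α = min{ |ω·(ℓ−ℓ̃)|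 : ℓ ≠ ℓ̃, |ℓ|+|ℓ̃| = r+2 } > 0. Then ‖Z‖ ≤ ‖f‖ and ‖χ‖ ≤ ‖f‖/α. -/
open MvPolynomial

open Classical in
lemma coeff_sum_monomial_aux {n : ℕ} (S : Finset ((Fin n ⊕ Fin n) →₀ ℕ))
    (c : ((Fin n ⊕ Fin n) →₀ ℕ) → ℂ) (d : (Fin n ⊕ Fin n) →₀ ℕ) :
    coeff d (∑ e ∈ S, monomial e (c e)) = if d ∈ S then c d else 0 := by
  rw [MvPolynomial.coeff_sum]
  simp_rw [coeff_monomial]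
  exact Finset.sum_ite_eq' S d c

open Classical in
lemma polyNorm_eq_sum {n : ℕ} (g : MvPolynomial (Fin n ⊕ Fin n) ℂ)
    (S : Finset ((Fin n ⊕ Fin n) →₀ ℕ)) (hS : g.support ⊆ S) :
    polyNorm n g = ∑ d ∈ S, ‖coeff d g‖ := by
  unfold polyNorm
  refine Finset.sum_subset hS fun d _ hd => ?_
  simp [MvPolynomial.notMem_support_iff.mp hd]

theorem stmt6 (n : ℕ) (hn : 1 ≤ n) (r : ℕ) (ω : Fin n → ℝ) (α : ℝ) (hα : 0 < α)
    (hmin : ∀ ℓ ℓt : Fin n → ℕ, ℓ ≠ ℓt → (∑ j : Fin n, (ℓ j + ℓt j)) = r + 2 →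
      α ≤ |∑ j : Fin n, ω j * ((ℓ j : ℝ) - (ℓt j : ℝ))|)
    (f : MvPolynomial (Fin n ⊕ Fin n) ℂ) (hf : f.IsHomogeneous (r + 2)) :
    polyNorm n (normalPart n f) ≤ polyNorm n f ∧
      polyNorm n (genFun n ω f) ≤ polyNorm n f / α := by
  classical
  constructor
  · -- normalPart bound
    set S := f.support.filter fun d => ∀ j : Fin n, d (Sum.inl j) = d (Sum.inr j) with hSdef
    have hsupp : (normalPart n f).support ⊆ S := by
      intro d hd
      by_contra hdS
      have : coeff d (normalPart n f) = 0 := by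
        rw [normalPart, coeff_sum_monomial_aux, if_neg hdS]
      exact MvPolynomial.mem_support_iff.mp hd this
    rw [polyNorm_eq_sum (normalPart n f) S hsupp]
    have heq : ∀ d ∈ S, ‖coeff d (normalPart n f)‖ = ‖coeff d f‖ := by
      intro d hd
      rw [normalPart, coeff_sum_monomial_aux, if_pos hd]
    rw [Finset.sum_congr rfl heq]
    exact Finset.sum_le_sum_of_subset_of_nonneg (Finset.filter_subset _ _)
      (fun d _ _ => norm_nonneg _)
  · -- genFun bound
    set S := f.support.filter fun d => ∃ j : Fin n, d (Sum.inl j) ≠ d (Sum.inr j) with hSdef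
    have hsupp : (genFun n ω f).support ⊆ S := by
      intro d hd
      by_contra hdS
      have : coeff d (genFun n ω f) = 0 := by
        rw [genFun, coeff_sum_monomial_aux, if_neg hdS]
      exact MvPolynomial.mem_support_iff.mp hd this
    rw [polyNorm_eq_sum (genFun n ω f) S hsupp]
    have hbound : ∀ d ∈ S, ‖coeff d (genFun n ω f)‖ ≤
        ‖coeff d f‖ / α := by
      intro d hd
      rw [genFun, coeff_sum_monomial_aux, if_pos hd]
      set s : ℝ := ∑ j : Fin n, ω j * ((d (Sum.inl j) : ℝ) - (d (Sum.inr j) : ℝ)) with hs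
      obtain ⟨hdsupp, j, hj⟩ := Finset.mem_filter.mp hd
      have hne : (fun j => d (Sum.inl j)) ≠ fun j => d (Sum.inr j) :=
        fun h => hj (congrFun h j)
      have hdeg : (∑ j : Fin n, (d (Sum.inl j) + d (Sum.inr j))) = r + 2 := by
        have h1 := hf (MvPolynomial.mem_support_iff.mp hdsupp)
        have hsum : ∑ i : Fin n ⊕ Fin n, d i = r + 2 := by
          simpa [Finsupp.weight_apply, Finsupp.sum_fintype] using h1
        rw [Fintype.sum_sum_type] at hsum
        rw [Finset.sum_add_distrib]
        exact hsum
      have hα' : α ≤ |s| := hmin _ _ hne hdeg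
      have habs : ‖coeff d f / (Complex.I * (s : ℂ))‖ =
          ‖coeff d f‖ / |s| := by
        rw [norm_div, norm_mul, Complex.norm_I, one_mul, Complex.norm_real, Real.norm_eq_abs]
      rw [habs]
      apply div_le_div_of_nonneg_left (norm_nonneg _) hα hα'
    calc ∑ d ∈ S, ‖coeff d (genFun n ω f)‖
        ≤ ∑ d ∈ S, ‖coeff d f‖ / α := Finset.sum_le_sum hbound
      _ ≤ ∑ d ∈ f.support, ‖coeff d f‖ / α :=
          Finset.sum_le_sum_of_subset_of_nonneg (Finset.filter_subset _ _)
            (fun d _ _ => div_nonneg (norm_nonneg _) hα.le)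
      _ = polyNorm n f / α := by rw [polyNorm, Finset.sum_div]
end

section
/- (Geometric increase of majorants.) Let r ≥ 1, E > 0, a > 0. Let Z₀ = Σ_{j=1}^n i ω_j u_j v_j for some ω ∈ ℝⁿ; let Z_s ∈ P_{s+2} for 1 ≤ s ≤ r−1 and f_s ∈ P_{s+2} for s ≥ r satisfy ‖Z_s‖ ≤ E a^{s+2} (1 ≤ s ≤ r−1) and ‖f_s‖ ≤ E a^{s+2} (s ≥ r). Let χ ∈ P_{r+2}, with expansion χ = Σ c_{k,k̃} u^k v^k̃ and D = Σ |c_{k,k̃}| · max_j max(k_j, k̃_j), solve the homological equation L_χ Z₀ + f_r = Z_r, where Z_r = Σ_{2|ℓ|=r+2} (coefficient of u^ℓ v^ℓ in f_r) u^ℓ v^ℓ is the part of f_r supported on monomials with equal exponents. Define the new terms, for s ≥ r+1: f'_s = f_s + Σ_{j≥1, 0≤m≤r−1, m+jr=s} (1/j!) L_χ^j Z_m + Σ_{j≥1, m≥r, m+jr=s} (1/j!) L_χ^j f_m, where Z₀ is used for m = 0. Set a_r = a·(1 + (r+1)D/a^r)^{1/r}. Then ‖Z_s‖ ≤ E a_r^{s+2}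 for 1 ≤ s ≤ r and ‖f'_s‖ ≤ E a_r^{s+2} for all s ≥ r+1. -/
open MvPolynomial

/-- The new common ratio `a_r = a (1 + (r+1) D / a^r)^{1/r}` of the geometric majorants. -/
noncomputable def newRatio (r : ℕ) (a D : ℝ) : ℝ :=
  a * (1 + ((r : ℝ) + 1) * D / a ^ r) ^ ((r : ℝ)⁻¹)



section Lemmas
open Finset
variable {n : ℕ}

lemma polyNorm_nonneg (f : MvPolynomial (Fin n ⊕ Fin n) ℂ) : 0 ≤ polyNorm n f :=
  Finset.sum_nonneg fun _ _ => norm_nonneg _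

lemma polyNorm_eq_sum_superset {f : MvPolynomial (Fin n ⊕ Fin n) ℂ} {T : Finset _}
    (h : f.support ⊆ T) : polyNorm n f = ∑ d ∈ T, ‖coeff d f‖ := by
  refine Finset.sum_subset h fun d _ hd => ?_
  rw [notMem_support_iff.mp hd]; simp

lemma polyNorm_add_le (f g : MvPolynomial (Fin n ⊕ Fin n) ℂ) :
    polyNorm n (f + g) ≤ polyNorm n f + polyNorm n g := by
  rw [polyNorm_eq_sum_superset (T := f.support ∪ g.support) (support_add),
    polyNorm_eq_sum_superset (T := f.support ∪ g.support) (Finset.subset_union_left),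
    polyNorm_eq_sum_superset (T := f.support ∪ g.support) (Finset.subset_union_right),
    ← Finset.sum_add_distrib]
  exact Finset.sum_le_sum fun d _ => by simpa [coeff_add] using norm_add_le _ _

lemma polyNorm_sum_le {ι : Type*} (s : Finset ι) (F : ι → MvPolynomial (Fin n ⊕ Fin n) ℂ) :
    polyNorm n (∑ i ∈ s, F i) ≤ ∑ i ∈ s, polyNorm n (F i) := by
  induction s using Finset.cons_induction with
  | empty => simp [polyNorm]
  | cons i s hi ih =>
    rw [Finset.sum_cons, Finset.sum_cons]
    exact (polyNorm_add_le _ _).trans (by linarith)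

lemma polyNorm_monomial_le (d : (Fin n ⊕ Fin n) →₀ ℕ) (c : ℂ) :
    polyNorm n (monomial d c) ≤ ‖c‖ := by
  by_cases hc : c = 0
  · simp [hc, polyNorm]
  · rw [polyNorm, support_monomial, if_neg hc]
    simp

lemma polyNorm_smul_le (c : ℂ) (f : MvPolynomial (Fin n ⊕ Fin n) ℂ) :
    polyNorm n (c • f) ≤ ‖c‖ * polyNorm n f := by
  rw [polyNorm_eq_sum_superset (T := f.support) (support_smul), polyNorm, Finset.mul_sum]
  exact Finset.sum_le_sum fun d _ => by simp [smul_eq_mul, map_mul]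

lemma polyNorm_sub_le (f g : MvPolynomial (Fin n ⊕ Fin n) ℂ) :
    polyNorm n (f - g) ≤ polyNorm n f + polyNorm n g := by
  have : polyNorm n (-g) = polyNorm n g := by
    simp [polyNorm, support_neg]
  calc polyNorm n (f - g) = polyNorm n (f + -g) := by rw [sub_eq_add_neg]
  _ ≤ polyNorm n f + polyNorm n (-g) := polyNorm_add_le _ _
  _ = _ := by rw [this]

noncomputable def wnorm (n : ℕ) (i : Fin n ⊕ Fin n) (f : MvPolynomial (Fin n ⊕ Fin n) ℂ) : ℝ :=
  ∑ d ∈ f.support, (d i : ℝ) * ‖coeff d f‖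

lemma wnorm_nonneg (i : Fin n ⊕ Fin n) (f : MvPolynomial (Fin n ⊕ Fin n) ℂ) :
    0 ≤ wnorm n i f :=
  Finset.sum_nonneg fun _ _ => mul_nonneg (by positivity) (norm_nonneg _)

lemma pderiv_eq_sum (i : Fin n ⊕ Fin n) (f : MvPolynomial (Fin n ⊕ Fin n) ℂ) :
    pderiv i f = ∑ d ∈ f.support, monomial (d - Finsupp.single i 1) (coeff d f * d i) := by
  conv_lhs => rw [f.as_sum]
  rw [map_sum]
  exact Finset.sum_congr rfl fun d _ => pderiv_monomial

lemma polyNorm_pderiv_le (i : Fin n ⊕ Fin n) (f : MvPolynomial (Fin n ⊕ Fin n) ℂ) :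
    polyNorm n (pderiv i f) ≤ wnorm n i f := by
  rw [pderiv_eq_sum]
  refine (polyNorm_sum_le _ _).trans (Finset.sum_le_sum fun d _ => ?_)
  refine (polyNorm_monomial_le _ _).trans ?_
  rw [norm_mul]
  simp [mul_comm]

lemma sum_wnorm {t : ℕ} {f : MvPolynomial (Fin n ⊕ Fin n) ℂ} (hf : f.IsHomogeneous t) :
    ∑ i : Fin n ⊕ Fin n, wnorm n i f = t * polyNorm n f := by
  simp only [wnorm]
  rw [Finset.sum_comm, polyNorm, Finset.mul_sum]
  refine Finset.sum_congr rfl fun d hd => ?_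
  rw [← Finset.sum_mul]
  congr 1
  have hdeg : d.degree = t := by
    rw [Finsupp.degree_eq_weight_one]; exact hf (mem_support_iff.mp hd)
  rw [← hdeg, Finsupp.degree_apply]
  rw [Finset.sum_subset (Finset.subset_univ d.support) (fun x _ hx => by
    simpa using Finsupp.notMem_support_iff.mp hx)]
  push_cast
  rfl

lemma polyNorm_monomial_mul_le (d : (Fin n ⊕ Fin n) →₀ ℕ) (c : ℂ)
    (g : MvPolynomial (Fin n ⊕ Fin n) ℂ) :
    polyNorm n (monomial d c * g) ≤ ‖c‖ * polyNorm n g := by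
  conv_lhs => rw [g.as_sum, Finset.mul_sum]
  refine (polyNorm_sum_le _ _).trans ?_
  rw [polyNorm, Finset.mul_sum]
  refine Finset.sum_le_sum fun e _ => ?_
  rw [monomial_mul]
  exact (polyNorm_monomial_le _ _).trans (by rw [norm_mul])

/-- norm of pderiv composite bound -/
lemma polyNorm_monomial_mul_pderiv_le (d : (Fin n ⊕ Fin n) →₀ ℕ) (c : ℂ)
    (i : Fin n ⊕ Fin n) (g : MvPolynomial (Fin n ⊕ Fin n) ℂ) :
    polyNorm n (monomial d c * pderiv i g) ≤ ‖c‖ * wnorm n i g :=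
  (polyNorm_monomial_mul_le _ _ _).trans
    (mul_le_mul_of_nonneg_left (polyNorm_pderiv_le _ _) (norm_nonneg _))

def Mnat {n : ℕ} (d : (Fin n ⊕ Fin n) →₀ ℕ) : ℕ :=
  Finset.univ.sup fun j : Fin n => max (d (Sum.inl j)) (d (Sum.inr j))

lemma le_Mnat (d : (Fin n ⊕ Fin n) →₀ ℕ) (i : Fin n ⊕ Fin n) : d i ≤ Mnat d := by
  have h : ∀ j : Fin n, max (d (Sum.inl j)) (d (Sum.inr j)) ≤ Mnat d := fun j => by
    unfold Mnat
    exact Finset.le_sup (f := fun j : Fin n => max (d (Sum.inl j)) (d (Sum.inr j)))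
      (Finset.mem_univ j)
  cases i with
  | inl j => exact le_trans (le_max_left _ _) (h j)
  | inr j => exact le_trans (le_max_right _ _) (h j)

lemma bracket_monomial_le {t : ℕ} (d : (Fin n ⊕ Fin n) →₀ ℕ) (c : ℂ)
    {g : MvPolynomial (Fin n ⊕ Fin n) ℂ} (hg : g.IsHomogeneous t) :
    polyNorm n (poissonBracket n (monomial d c) g) ≤
      ‖c‖ * (Mnat d : ℝ) * (t * polyNorm n g) := by
  rw [poissonBracket]
  refine (polyNorm_sum_le _ _).trans ?_
  have key : ∀ j : Fin n,
      polyNorm n (pderiv (Sum.inr j) (monomial d c) * pderiv (Sum.inl j) g -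
        pderiv (Sum.inl j) (monomial d c) * pderiv (Sum.inr j) g) ≤
      ‖c‖ * (Mnat d : ℝ) * (wnorm n (Sum.inl j) g + wnorm n (Sum.inr j) g) := by
    intro j
    refine (polyNorm_sub_le _ _).trans ?_
    rw [pderiv_monomial, pderiv_monomial]
    have h1 := polyNorm_monomial_mul_pderiv_le (d - Finsupp.single (Sum.inr j) 1)
      (c * d (Sum.inr j)) (Sum.inl j) g
    have h2 := polyNorm_monomial_mul_pderiv_le (d - Finsupp.single (Sum.inl j) 1)
      (c * d (Sum.inl j)) (Sum.inr j) g
    have e1 : ‖c * (d (Sum.inr j) : ℂ)‖ = ‖c‖ * (d (Sum.inr j) : ℝ) := by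
      rw [norm_mul]; norm_num
    have e2 : ‖c * (d (Sum.inl j) : ℂ)‖ = ‖c‖ * (d (Sum.inl j) : ℝ) := by
      rw [norm_mul]; norm_num
    rw [e1] at h1; rw [e2] at h2
    have m1 : (d (Sum.inr j) : ℝ) ≤ (Mnat d : ℝ) := by exact_mod_cast le_Mnat d (Sum.inr j)
    have m2 : (d (Sum.inl j) : ℝ) ≤ (Mnat d : ℝ) := by exact_mod_cast le_Mnat d (Sum.inl j)
    have hc := norm_nonneg c
    have w1 := wnorm_nonneg (n := n) (Sum.inl j) g
    have w2 := wnorm_nonneg (n := n) (Sum.inr j) g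
    nlinarith [mul_le_mul_of_nonneg_right (mul_le_mul_of_nonneg_left m1 hc) w1,
      mul_le_mul_of_nonneg_right (mul_le_mul_of_nonneg_left m2 hc) w2]
  refine (Finset.sum_le_sum fun j _ => key j).trans ?_
  rw [← Finset.mul_sum, ← sum_wnorm hg, Fintype.sum_sum_type]
  rw [← Finset.sum_add_distrib]

lemma Dconst_nonneg (χ : MvPolynomial (Fin n ⊕ Fin n) ℂ) : 0 ≤ Dconst n χ :=
  Finset.sum_nonneg fun _ _ => mul_nonneg (norm_nonneg _) (by positivity)

lemma poissonBracket_sum_left {ι : Type*} (s : Finset ι)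
    (F : ι → MvPolynomial (Fin n ⊕ Fin n) ℂ) (g : MvPolynomial (Fin n ⊕ Fin n) ℂ) :
    poissonBracket n (∑ i ∈ s, F i) g = ∑ i ∈ s, poissonBracket n (F i) g := by
  unfold poissonBracket
  rw [Finset.sum_comm]
  refine Finset.sum_congr rfl fun j _ => ?_
  rw [map_sum, map_sum, Finset.sum_mul, Finset.sum_mul, ← Finset.sum_sub_distrib]

lemma bracket_le {t : ℕ} (χ : MvPolynomial (Fin n ⊕ Fin n) ℂ)
    {g : MvPolynomial (Fin n ⊕ Fin n) ℂ} (hg : g.IsHomogeneous t) :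
    polyNorm n (poissonBracket n χ g) ≤ Dconst n χ * (t * polyNorm n g) := by
  conv_lhs => rw [χ.as_sum, poissonBracket_sum_left]
  refine (polyNorm_sum_le _ _).trans ?_
  rw [Dconst, Finset.sum_mul]
  exact Finset.sum_le_sum fun d _ => bracket_monomial_le d _ hg

-- homogeneity of pderiv
lemma pderiv_isHomogeneous {m : ℕ} {f : MvPolynomial (Fin n ⊕ Fin n) ℂ}
    (hf : f.IsHomogeneous (m + 1)) (i : Fin n ⊕ Fin n) :
    (pderiv i f).IsHomogeneous m := by
  rw [f.as_sum, map_sum]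
  refine IsHomogeneous.sum _ _ _ fun d hd => ?_
  rw [pderiv_monomial]
  by_cases hdi : d i = 0
  · rw [hdi]; norm_num; exact isHomogeneous_zero _ _ _
  · apply isHomogeneous_monomial
    have hdeg : d.degree = m + 1 := by
      rw [Finsupp.degree_eq_weight_one]; exact hf (mem_support_iff.mp hd)
    have hle : Finsupp.single i 1 ≤ d := by
      rw [Finsupp.single_le_iff]; omega
    have hsum : d - Finsupp.single i 1 + Finsupp.single i 1 = d := tsub_add_cancel_of_le hle
    have h2 : (d - Finsupp.single i 1).degree + (Finsupp.single i 1).degree = d.degree := by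
      rw [Finsupp.degree_eq_weight_one]
      rw [← map_add, hsum]
    have h3 : (Finsupp.single i 1).degree = 1 := by
      simp [Finsupp.degree_apply, Finsupp.support_single_ne_zero i one_ne_zero]
    omega

lemma bracket_homog {p t : ℕ} {χ g : MvPolynomial (Fin n ⊕ Fin n) ℂ}
    (hχ : χ.IsHomogeneous (p + 1)) (hg : g.IsHomogeneous (t + 1)) :
    (poissonBracket n χ g).IsHomogeneous (p + t) := by
  unfold poissonBracket
  refine IsHomogeneous.sum _ _ _ fun j _ => ?_
  exact ((pderiv_isHomogeneous hχ _).mul (pderiv_isHomogeneous hg _)).sub ((pderiv_isHomogeneous hχ _).mul (pderiv_isHomogeneous hg _))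

lemma iter_bound {r t : ℕ} {χ g : MvPolynomial (Fin n ⊕ Fin n) ℂ}
    (hχ : χ.IsHomogeneous (r + 2)) (hg : g.IsHomogeneous (t + 2)) (j : ℕ) :
    ((poissonBracket n χ)^[j] g).IsHomogeneous (t + j * r + 2) ∧
      polyNorm n ((poissonBracket n χ)^[j] g) ≤
        (Dconst n χ) ^ j * (∏ i ∈ Finset.range j, ((t + 2 + i * r : ℕ) : ℝ)) *
          polyNorm n g := by
  induction j with
  | zero => simpa using hg
  | succ j ih =>
    obtain ⟨ih1, ih2⟩ := ih
    rw [Function.iterate_succ_apply']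
    constructor
    · have h := bracket_homog (p := r + 1) (t := t + j * r + 1) hχ ih1
      convert h using 1
      ring
    · have hb := bracket_le (t := t + j * r + 2) χ ih1
      have hD := Dconst_nonneg (n := n) χ
      have hno := polyNorm_nonneg (n := n) g
      calc polyNorm n (poissonBracket n χ ((poissonBracket n χ)^[j] g))
          ≤ Dconst n χ * ((t + j * r + 2 : ℕ) * polyNorm n ((poissonBracket n χ)^[j] g)) := by
            exact_mod_cast hb
        _ ≤ Dconst n χ * ((t + j * r + 2 : ℕ) *
            ((Dconst n χ) ^ j * (∏ i ∈ Finset.range j, ((t + 2 + i * r : ℕ) : ℝ)) *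
              polyNorm n g)) := by
            refine mul_le_mul_of_nonneg_left (mul_le_mul_of_nonneg_left ih2 ?_) hD
            positivity
        _ = (Dconst n χ) ^ (j + 1) *
            (∏ i ∈ Finset.range (j + 1), ((t + 2 + i * r : ℕ) : ℝ)) * polyNorm n g := by
            rw [Finset.prod_range_succ]
            have : ((t + 2 + j * r : ℕ) : ℝ) = ((t + j * r + 2 : ℕ) : ℝ) := by push_cast; ring
            rw [this]; ring

lemma polyNorm_normalPart_le (f : MvPolynomial (Fin n ⊕ Fin n) ℂ) :
    polyNorm n (normalPart n f) ≤ polyNorm n f := by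
  classical
  refine (polyNorm_sum_le _ _).trans ?_
  refine le_trans (Finset.sum_le_sum fun d _ => polyNorm_monomial_le d (coeff d f)) ?_
  exact Finset.sum_le_sum_of_subset_of_nonneg (Finset.filter_subset _ _)
    (fun _ _ _ => norm_nonneg _)

lemma polyNorm_normalPart_sub_le (f : MvPolynomial (Fin n ⊕ Fin n) ℂ) :
    polyNorm n (normalPart n f - f) ≤ polyNorm n f := by
  classical
  have hf : f = normalPart n f +
      ∑ d ∈ f.support.filter fun d => ¬ ∀ j : Fin n, d (Sum.inl j) = d (Sum.inr j),
        monomial d (coeff d f) := by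
    rw [normalPart, Finset.sum_filter_add_sum_filter_not]
    exact f.as_sum
  have : normalPart n f - f = -∑ d ∈ f.support.filter
      fun d => ¬ ∀ j : Fin n, d (Sum.inl j) = d (Sum.inr j), monomial d (coeff d f) := by
    rw [eq_neg_iff_add_eq_zero]
    nth_rewrite 2 [hf]
    ring
  rw [this]
  have hneg : ∀ g : MvPolynomial (Fin n ⊕ Fin n) ℂ, polyNorm n (-g) = polyNorm n g := by
    intro g; simp [polyNorm, support_neg]
  rw [hneg]
  refine (polyNorm_sum_le _ _).trans ?_
  refine le_trans (Finset.sum_le_sum fun d _ => polyNorm_monomial_le d (coeff d f)) ?_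
  exact Finset.sum_le_sum_of_subset_of_nonneg (Finset.filter_subset _ _)
    (fun _ _ _ => norm_nonneg _)

lemma normalPart_isHomogeneous {m : ℕ} {f : MvPolynomial (Fin n ⊕ Fin n) ℂ}
    (hf : f.IsHomogeneous m) : (normalPart n f).IsHomogeneous m := by
  classical
  refine IsHomogeneous.sum _ _ _ fun d hd => ?_
  refine isHomogeneous_monomial _ ?_
  rw [Finsupp.degree_eq_weight_one]
  exact hf (mem_support_iff.mp (Finset.mem_filter.mp hd).1)

-- key nat product inequality
lemma factor_ineq {r s N i j : ℕ} (hr : 1 ≤ r) (hN : N = (s + 2) / r)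
    (hij : i < j) (hj : j * r ≤ s) (hjN : j ≤ N) :
    s + 2 - (i + 1) * r + 2 ≤ (r + 1) * (N - i) := by
  have hlt : s + 2 < (N + 1) * r := by
    rw [hN, add_mul, one_mul]
    have := Nat.div_add_mod (s + 2) r
    have := Nat.mod_lt (s + 2) (show 0 < r by omega)
    have hmc : (s + 2) / r * r = r * ((s + 2) / r) := Nat.mul_comm _ _
    omega
  have his : (i + 1) * r ≤ s := le_trans (Nat.mul_le_mul_right r hij) hj
  have hiN : i + 1 ≤ N := lt_of_lt_of_le hij hjN
  have e1 : (N + 1) * r = (N - i) * r + (i + 1) * r := by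
    rw [← add_mul]; congr 1; omega
  have e2 : (r + 1) * (N - i) = (N - i) * r + (N - i) := by ring
  omega

lemma prod_nat_ineq {r s N j : ℕ} (hr : 1 ≤ r) (hN : N = (s + 2) / r)
    (hj : j * r ≤ s) (hjN : j ≤ N) :
    (∏ i ∈ range j, (s + 2 - (i + 1) * r)) ≤ (r + 1) ^ j * N.descFactorial j := by
  rw [Nat.descFactorial_eq_prod_range]
  calc (∏ i ∈ range j, (s + 2 - (i + 1) * r))
      ≤ ∏ i ∈ range j, ((r + 1) * (N - i)) :=
        Finset.prod_le_prod' fun i hi => le_trans (Nat.le_add_right _ 2)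
          (factor_ineq hr hN (Finset.mem_range.mp hi) hj hjN)
    _ = (r + 1) ^ j * ∏ i ∈ range j, (N - i) := by
        rw [Finset.prod_mul_distrib, Finset.prod_const, Finset.card_range]

lemma prod_reflect {r s j : ℕ} (hj : j * r ≤ s) :
    ∏ i ∈ range j, (s - j * r + 2 + i * r) = ∏ i ∈ range j, (s + 2 - (i + 1) * r) := by
  rw [← Finset.prod_range_reflect]
  refine Finset.prod_congr rfl fun i hi => ?_
  have hij : i < j := Finset.mem_range.mp hi
  have h1 : (j - 1 - i) = j - (i + 1) := by omega
  have h2 : (j - (i + 1)) * r = j * r - (i + 1) * r := Nat.sub_mul _ _ _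
  have h3 : (i + 1) * r ≤ j * r := Nat.mul_le_mul_right r (by omega)
  rw [h1, h2]
  omega

lemma slack_ineq {r N K : ℕ} (hr : 1 ≤ r) (hK : 2 ≤ K) (hNK : K ≤ N)
    (h1 : r = 1 → N = K + 2) :
    (1 + (K : ℝ)⁻¹) * ((r : ℝ) + 2) ≤ ((r : ℝ) + 1) * ((N - (K - 2) : ℕ) : ℝ) := by
  have hc : N - (K - 2) = N - K + 2 := by omega
  rw [hc]
  have hKinv : (K : ℝ)⁻¹ ≤ 2⁻¹ := by
    rw [inv_le_inv₀ (by positivity) (by norm_num)]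
    exact_mod_cast hK
  have hle : (1 + (K : ℝ)⁻¹) * ((r : ℝ) + 2) ≤ (3 / 2) * ((r : ℝ) + 2) := by
    have : (0:ℝ) ≤ (r : ℝ) + 2 := by positivity
    nlinarith
  refine hle.trans ?_
  rcases Nat.lt_or_ge r 2 with h | h
  · have hr1 : r = 1 := by omega
    have : N - K + 2 = 4 := by omega
    rw [this, hr1]; norm_num
  · have h2 : (2 : ℝ) ≤ ((N - K + 2 : ℕ) : ℝ) := by exact_mod_cast Nat.le_add_left 2 (N - K)
    have hr2 : (2 : ℝ) ≤ (r : ℝ) := by exact_mod_cast h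
    nlinarith

lemma slack_nat {r K N : ℕ} (hr : 1 ≤ r) (hK : 2 ≤ K) (hc2 : 2 ≤ N - (K - 2))
    (hc4 : r = 1 → N - (K - 2) = 4) :
    (K + 1) * (r + 2) ≤ K * ((r + 1) * (N - (K - 2))) := by
  rcases Nat.lt_or_ge r 2 with h | h
  · have hr1 : r = 1 := by omega
    rw [hr1, hc4 hr1]
    omega
  · calc (K + 1) * (r + 2) ≤ K * ((r + 1) * 2) := by nlinarith
      _ ≤ K * ((r + 1) * (N - (K - 2))) := by
          exact Nat.mul_le_mul_left K (Nat.mul_le_mul_left (r + 1) hc2)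

lemma spec_nat {r s N K : ℕ} (hr : 1 ≤ r) (hN : N = (s + 2) / r) (hs : s = K * r)
    (hK : 2 ≤ K) :
    (K + 1) * ∏ i ∈ range (K - 1), (s + 2 - (i + 1) * r) ≤
      K * ((r + 1) ^ (K - 1) * N.descFactorial (K - 1)) := by
  have hrs : r ≤ s := by
    calc r = 1 * r := (one_mul r).symm
    _ ≤ K * r := Nat.mul_le_mul_right r (by omega)
    _ = s := hs.symm
  have hK2r : (K - 2) * r + 2 * r = s := by
    rw [← add_mul, hs]; congr 1; omega
  have hKN : K ≤ N := by
    rw [hN, Nat.le_div_iff_mul_le (show 0 < r by omega)]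
    omega
  have hlast : s + 2 - (K - 1) * r = r + 2 := by
    have h1 : (K - 1) * r + 1 * r = K * r := by rw [← add_mul]; congr 1; omega
    omega
  have h1 : ∏ i ∈ range (K - 1), (s + 2 - (i + 1) * r) =
      (∏ i ∈ range (K - 2), (s + 2 - (i + 1) * r)) * (r + 2) := by
    rw [show K - 1 = (K - 2) + 1 by omega, prod_range_succ]
    congr 1
    rw [show K - 2 + 1 = K - 1 by omega, hlast]
  have h2 : N.descFactorial (K - 1) = (N - (K - 2)) * N.descFactorial (K - 2) := by
    rw [show K - 1 = (K - 2) + 1 by omega, Nat.descFactorial_succ]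
  have h3 : (∏ i ∈ range (K - 2), (s + 2 - (i + 1) * r)) ≤
      (r + 1) ^ (K - 2) * N.descFactorial (K - 2) :=
    prod_nat_ineq hr hN (by omega) (by omega)
  have hc2 : 2 ≤ N - (K - 2) := by omega
  have hc4 : r = 1 → N - (K - 2) = 4 := by
    intro hr1
    subst hr1
    rw [Nat.div_one] at hN
    rw [mul_one] at hs
    omega
  have h4 := slack_nat hr hK hc2 hc4
  calc (K + 1) * ∏ i ∈ range (K - 1), (s + 2 - (i + 1) * r)
      = ((K + 1) * (r + 2)) * ∏ i ∈ range (K - 2), (s + 2 - (i + 1) * r) := by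
        rw [h1]; ring
    _ ≤ (K * ((r + 1) * (N - (K - 2)))) * ((r + 1) ^ (K - 2) * N.descFactorial (K - 2)) :=
        Nat.mul_le_mul h4 h3
    _ = K * ((r + 1) ^ (K - 1) * N.descFactorial (K - 1)) := by
        rw [h2, show K - 1 = (K - 2) + 1 by omega, pow_succ]
        ring

lemma B_eq {r s j : ℕ} {a : ℝ} (ha : 0 < a) (hj : j * r ≤ s) (E D C : ℝ) :
    E * a ^ (s + 2) * C * (((r : ℝ) + 1) * D / a ^ r) ^ j =
      E * a ^ (s - j * r + 2) * D ^ j * (((r : ℝ) + 1) ^ j * C) := by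
  have hmc : r * j = j * r := Nat.mul_comm r j
  have hsplit : a ^ (s + 2) = a ^ (s - j * r + 2) * a ^ (r * j) := by
    rw [← pow_add]
    congr 1
    omega
  rw [div_pow, mul_pow, ← pow_mul, hsplit]
  have hne : a ^ (r * j) ≠ 0 := by positivity
  field_simp

lemma gB_le_B {r s N j : ℕ} {E a D : ℝ} (hE : 0 ≤ E) (ha : 0 < a) (hD : 0 ≤ D)
    (hr : 1 ≤ r) (hN : N = (s + 2) / r) (hj : j * r ≤ s) (hjN : j ≤ N) :
    (j.factorial : ℝ)⁻¹ *
        (D ^ j * ((∏ i ∈ range j, (s + 2 - (i + 1) * r) : ℕ) : ℝ) * (E * a ^ (s - j * r + 2)))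
      ≤ E * a ^ (s + 2) * (N.choose j : ℝ) * (((r : ℝ) + 1) * D / a ^ r) ^ j := by
  rw [B_eq ha hj]
  have hcore : (j.factorial : ℝ)⁻¹ * ((∏ i ∈ range j, (s + 2 - (i + 1) * r) : ℕ) : ℝ) ≤
      ((r : ℝ) + 1) ^ j * (N.choose j : ℝ) := by
    rw [inv_mul_le_iff₀ (by exact_mod_cast j.factorial_pos)]
    have h1 : ((∏ i ∈ range j, (s + 2 - (i + 1) * r) : ℕ) : ℝ) ≤
        (((r + 1) ^ j * N.descFactorial j : ℕ) : ℝ) :=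
      Nat.cast_le.2 (prod_nat_ineq hr hN hj hjN)
    refine h1.trans (le_of_eq ?_)
    rw [Nat.descFactorial_eq_factorial_mul_choose]
    push_cast
    ring
  calc (j.factorial : ℝ)⁻¹ *
        (D ^ j * ((∏ i ∈ range j, (s + 2 - (i + 1) * r) : ℕ) : ℝ) * (E * a ^ (s - j * r + 2)))
      = (E * a ^ (s - j * r + 2) * D ^ j) *
          ((j.factorial : ℝ)⁻¹ * ((∏ i ∈ range j, (s + 2 - (i + 1) * r) : ℕ) : ℝ)) := by ring
    _ ≤ (E * a ^ (s - j * r + 2) * D ^ j) * (((r : ℝ) + 1) ^ j * (N.choose j : ℝ)) := by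
        refine mul_le_mul_of_nonneg_left hcore (by positivity)
    _ = E * a ^ (s - j * r + 2) * D ^ j * (((r : ℝ) + 1) ^ j * (N.choose j : ℝ)) := by ring

lemma gBspec_le_B {r s N K : ℕ} {E a D : ℝ} (hE : 0 ≤ E) (ha : 0 < a) (hD : 0 ≤ D)
    (hr : 1 ≤ r) (hN : N = (s + 2) / r) (hs : s = K * r) (hK : 2 ≤ K) :
    (1 + (K : ℝ)⁻¹) * ((((K - 1).factorial : ℝ))⁻¹ *
        (D ^ (K - 1) * ((∏ i ∈ range (K - 1), (s + 2 - (i + 1) * r) : ℕ) : ℝ) *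
          (E * a ^ (s - (K - 1) * r + 2))))
      ≤ E * a ^ (s + 2) * (N.choose (K - 1) : ℝ) * (((r : ℝ) + 1) * D / a ^ r) ^ (K - 1) := by
  have hjr : (K - 1) * r ≤ s := by
    rw [hs]
    exact Nat.mul_le_mul_right r (by omega)
  have hKN : K ≤ N := by
    rw [hN, Nat.le_div_iff_mul_le (show 0 < r by omega)]
    omega
  rw [B_eq ha hjr]
  set P : ℝ := ((∏ i ∈ range (K - 1), (s + 2 - (i + 1) * r) : ℕ) : ℝ) with hP
  have hPpos : 0 ≤ P := by positivity
  have hcore : (1 + (K : ℝ)⁻¹) * ((((K - 1).factorial : ℝ))⁻¹ * P) ≤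
      ((r : ℝ) + 1) ^ (K - 1) * (N.choose (K - 1) : ℝ) := by
    have hKpos : (0 : ℝ) < (K : ℝ) := by
      exact_mod_cast (show 0 < K by omega)
    have hfpos : (0 : ℝ) < ((K - 1).factorial : ℝ) := by
      exact_mod_cast (K - 1).factorial_pos
    have hspec : ((K : ℝ) + 1) * P ≤
        (K : ℝ) * (((r : ℝ) + 1) ^ (K - 1) * (((K - 1).factorial : ℝ) *
          (N.choose (K - 1) : ℝ))) := by
      have h0 := spec_nat hr hN hs hK
      rw [Nat.descFactorial_eq_factorial_mul_choose] at h0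
      have h1 := (Nat.cast_le (α := ℝ)).2 h0
      push_cast at h1
      rw [hP]
      push_cast
      linarith
    have heq : 1 + (K : ℝ)⁻¹ = ((K : ℝ) + 1) / K := by field_simp
    rw [heq, div_mul_eq_mul_div, div_le_iff₀ hKpos]
    calc ((K : ℝ) + 1) * ((((K - 1).factorial : ℝ))⁻¹ * P)
        = (((K - 1).factorial : ℝ))⁻¹ * (((K : ℝ) + 1) * P) := by ring
      _ ≤ (((K - 1).factorial : ℝ))⁻¹ * ((K : ℝ) * (((r : ℝ) + 1) ^ (K - 1) *
            (((K - 1).factorial : ℝ) * (N.choose (K - 1) : ℝ)))) :=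
          mul_le_mul_of_nonneg_left hspec (by positivity)
      _ = ((r : ℝ) + 1) ^ (K - 1) * (N.choose (K - 1) : ℝ) * (K : ℝ) := by
          field_simp
  calc (1 + (K : ℝ)⁻¹) * ((((K - 1).factorial : ℝ))⁻¹ *
        (D ^ (K - 1) * P * (E * a ^ (s - (K - 1) * r + 2))))
      = (E * a ^ (s - (K - 1) * r + 2) * D ^ (K - 1)) *
          ((1 + (K : ℝ)⁻¹) * ((((K - 1).factorial : ℝ))⁻¹ * P)) := by ring
    _ ≤ (E * a ^ (s - (K - 1) * r + 2) * D ^ (K - 1)) *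
          (((r : ℝ) + 1) ^ (K - 1) * (N.choose (K - 1) : ℝ)) :=
        mul_le_mul_of_nonneg_left hcore (by positivity)
    _ = E * a ^ (s - (K - 1) * r + 2) * D ^ (K - 1) *
          (((r : ℝ) + 1) ^ (K - 1) * (N.choose (K - 1) : ℝ)) := by ring

end Lemmas

/-- Geometric increase of the majorants at the `r`-th normalization step.  The pairs
`(j,m)` with `j ≥ 1`, `m + j r = s` are parametrized by `j ∈ [1, s/r]`, `m = s - j r`;
the first sum ranges over those with `0 ≤ m ≤ r-1` (with `Z 0` used for `m = 0`) and the
second over those with `m ≥ r`. -/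
theorem stmt8 (n : ℕ) (hn : 1 ≤ n) (r : ℕ) (hr : 1 ≤ r) (E a : ℝ) (hE : 0 < E) (ha : 0 < a)
    (ω : Fin n → ℝ)
    (Z f : ℕ → MvPolynomial (Fin n ⊕ Fin n) ℂ)
    (hZ0 : Z 0 = oscHam n ω)
    (hZhom : ∀ s : ℕ, 1 ≤ s → s ≤ r - 1 → (Z s).IsHomogeneous (s + 2))
    (hZnorm : ∀ s : ℕ, 1 ≤ s → s ≤ r - 1 → polyNorm n (Z s) ≤ E * a ^ (s + 2))
    (hfhom : ∀ s : ℕ, r ≤ s → (f s).IsHomogeneous (s + 2))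
    (hfnorm : ∀ s : ℕ, r ≤ s → polyNorm n (f s) ≤ E * a ^ (s + 2))
    (χ : MvPolynomial (Fin n ⊕ Fin n) ℂ) (hχ : χ.IsHomogeneous (r + 2))
    (hZr : Z r = normalPart n (f r))
    (hHomEq : poissonBracket n χ (Z 0) + f r = Z r) :
    (∀ s : ℕ, 1 ≤ s → s ≤ r → polyNorm n (Z s) ≤ E * (newRatio r a (Dconst n χ)) ^ (s + 2)) ∧
      ∀ s : ℕ, r + 1 ≤ s →
        polyNorm n
            (f s
              + ∑ j ∈ (Finset.Icc 1 (s / r)).filter fun j => s - j * r ≤ r - 1,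
                  ((j.factorial : ℂ)⁻¹) • (poissonBracket n χ)^[j] (Z (s - j * r))
              + ∑ j ∈ (Finset.Icc 1 (s / r)).filter fun j => r ≤ s - j * r,
                  ((j.factorial : ℂ)⁻¹) • (poissonBracket n χ)^[j] (f (s - j * r))) ≤
          E * (newRatio r a (Dconst n χ)) ^ (s + 2) := by
  classical
  have hD : 0 ≤ Dconst n χ := Dconst_nonneg χ
  set D := Dconst n χ with hDdef
  set x : ℝ := ((r : ℝ) + 1) * D / a ^ r with hxdef
  have hx : 0 ≤ x := by rw [hxdef]; positivity
  have hbase : (1 : ℝ) ≤ 1 + x := by linarith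
  have hrpow1 : (1 : ℝ) ≤ (1 + x) ^ ((r : ℝ)⁻¹) :=
    Real.one_le_rpow hbase (by positivity)
  have hnR : newRatio r a D = a * (1 + x) ^ ((r : ℝ)⁻¹) := by
    rw [newRatio, hxdef]
  have haR : a ≤ newRatio r a D := by
    rw [hnR]
    nth_rewrite 1 [← mul_one a]
    exact mul_le_mul_of_nonneg_left hrpow1 ha.le
  have hEaR : ∀ t : ℕ, E * a ^ t ≤ E * (newRatio r a D) ^ t := fun t =>
    mul_le_mul_of_nonneg_left (pow_le_pow_left₀ ha.le haR t) hE.le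
  have hfr := hfnorm r le_rfl
  constructor
  · intro s hs1 hsr
    rcases lt_or_eq_of_le hsr with hlt | heq
    · exact (hZnorm s hs1 (by omega)).trans (hEaR (s + 2))
    · subst heq
      rw [hZr]
      exact ((polyNorm_normalPart_le _).trans hfr).trans (hEaR (s + 2))
  · intro s hs
    set K := s / r with hKdef
    set N := (s + 2) / r with hNdef
    have hr0 : 0 < r := hr
    have hKN : K ≤ N := Nat.div_le_div_right (by omega)
    have hKr : K * r ≤ s := Nat.div_mul_le_self s r
    have hNr : N * r ≤ s + 2 := Nat.div_mul_le_self _ r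
    have hK1 : 1 ≤ K := by
      rw [hKdef, Nat.le_div_iff_mul_le hr0]; omega
    set L := poissonBracket n χ with hLdef
    set G : ℕ → MvPolynomial (Fin n ⊕ Fin n) ℂ := fun j =>
      ((j.factorial : ℂ)⁻¹) •
        L^[j] (if s - j * r ≤ r - 1 then Z (s - j * r) else f (s - j * r)) with hGdef
    have hpoly : (f s
        + ∑ j ∈ (Finset.Icc 1 K).filter (fun j => s - j * r ≤ r - 1),
            ((j.factorial : ℂ)⁻¹) • (poissonBracket n χ)^[j] (Z (s - j * r))
        + ∑ j ∈ (Finset.Icc 1 K).filter (fun j => r ≤ s - j * r),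
            ((j.factorial : ℂ)⁻¹) • (poissonBracket n χ)^[j] (f (s - j * r)))
        = f s + ∑ j ∈ Finset.Icc 1 K, G j := by
      have e1 : ∑ j ∈ (Finset.Icc 1 K).filter (fun j => s - j * r ≤ r - 1),
          ((j.factorial : ℂ)⁻¹) • (poissonBracket n χ)^[j] (Z (s - j * r))
          = ∑ j ∈ (Finset.Icc 1 K).filter (fun j => s - j * r ≤ r - 1), G j :=
        Finset.sum_congr rfl fun j hj => by
          simp only [hGdef, ← hLdef]
          rw [if_pos (Finset.mem_filter.mp hj).2]
      have e2 : (Finset.Icc 1 K).filter (fun j => r ≤ s - j * r)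
          = (Finset.Icc 1 K).filter (fun j => ¬ (s - j * r ≤ r - 1)) := by
        refine Finset.filter_congr fun j _ => ?_
        constructor <;> intro h2 <;> omega
      have e3 : ∑ j ∈ (Finset.Icc 1 K).filter (fun j => ¬ (s - j * r ≤ r - 1)),
          ((j.factorial : ℂ)⁻¹) • (poissonBracket n χ)^[j] (f (s - j * r))
          = ∑ j ∈ (Finset.Icc 1 K).filter (fun j => ¬ (s - j * r ≤ r - 1)), G j :=
        Finset.sum_congr rfl fun j hj => by
          simp only [hGdef, ← hLdef]
          rw [if_neg (Finset.mem_filter.mp hj).2]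
      rw [e1, e2, e3, add_assoc, Finset.sum_filter_add_sum_filter_not]
    rw [hpoly]
    set gB : ℕ → ℝ := fun j => (j.factorial : ℝ)⁻¹ *
        (D ^ j * ((∏ i ∈ Finset.range j, (s + 2 - (i + 1) * r) : ℕ) : ℝ)
          * (E * a ^ (s - j * r + 2))) with hgBdef
    set B : ℕ → ℝ := fun j => E * a ^ (s + 2) * (N.choose j : ℝ) * x ^ j with hBdef
    have hBnn : ∀ j : ℕ, 0 ≤ B j := fun j => by
      rw [hBdef]
      exact mul_nonneg (mul_nonneg (mul_nonneg hE.le (pow_nonneg ha.le _))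
        (Nat.cast_nonneg _)) (pow_nonneg hx _)
    have hG_generic : ∀ j : ℕ, 1 ≤ j → j ≤ K → 1 ≤ s - j * r →
        polyNorm n (G j) ≤ gB j := by
      intro j hj1 hjK hm1
      have hjr : j * r ≤ s := le_trans (Nat.mul_le_mul_right r hjK) hKr
      set g : MvPolynomial (Fin n ⊕ Fin n) ℂ :=
        if s - j * r ≤ r - 1 then Z (s - j * r) else f (s - j * r) with hgdef
      have hg_hom : g.IsHomogeneous (s - j * r + 2) := by
        rw [hgdef]
        split_ifs with h
        · exact hZhom _ hm1 h
        · exact hfhom _ (by omega)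
      have hg_norm : polyNorm n g ≤ E * a ^ (s - j * r + 2) := by
        rw [hgdef]
        split_ifs with h
        · exact hZnorm _ hm1 h
        · exact hfnorm _ (by omega)
      have hib := (iter_bound hχ hg_hom j).2
      have hprod : (∏ i ∈ Finset.range j, ((s - j * r + 2 + i * r : ℕ) : ℝ))
          = ((∏ i ∈ Finset.range j, (s + 2 - (i + 1) * r) : ℕ) : ℝ) := by
        rw [← Nat.cast_prod]
        exact_mod_cast congrArg (Nat.cast (R := ℝ)) (prod_reflect hjr)
      have hGj : G j = ((j.factorial : ℂ)⁻¹) • L^[j] g := by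
        simp only [hGdef, hgdef]
      rw [hGj]
      calc polyNorm n (((j.factorial : ℂ)⁻¹) • L^[j] g)
          ≤ ‖(j.factorial : ℂ)⁻¹‖ * polyNorm n (L^[j] g) :=
            polyNorm_smul_le _ _
        _ = (j.factorial : ℝ)⁻¹ * polyNorm n (L^[j] g) := by
            rw [norm_inv, Complex.norm_natCast]
        _ ≤ (j.factorial : ℝ)⁻¹ *
            (D ^ j * ((∏ i ∈ Finset.range j, (s + 2 - (i + 1) * r) : ℕ) : ℝ)
              * (E * a ^ (s - j * r + 2))) := by
            refine mul_le_mul_of_nonneg_left ?_ (by positivity)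
            rw [← hprod]
            calc polyNorm n (L^[j] g)
                ≤ D ^ j * (∏ i ∈ Finset.range j, ((s - j * r + 2 + i * r : ℕ) : ℝ))
                    * polyNorm n g := hib
              _ ≤ D ^ j * (∏ i ∈ Finset.range j, ((s - j * r + 2 + i * r : ℕ) : ℝ))
                    * (E * a ^ (s - j * r + 2)) := by
                  refine mul_le_mul_of_nonneg_left hg_norm ?_
                  have := pow_nonneg hD j
                  positivity
        _ = gB j := by rw [hgBdef]
    have hgBB : ∀ j : ℕ, j ≤ K → gB j ≤ B j := by
      intro j hjK
      have hjr : j * r ≤ s := le_trans (Nat.mul_le_mul_right r hjK) hKr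
      rw [hgBdef, hBdef, hxdef]
      exact gB_le_B hE.le ha hD hr hNdef hjr (le_trans hjK hKN)
    have key : ∑ j ∈ Finset.Icc 1 K, polyNorm n (G j) ≤ ∑ j ∈ Finset.Icc 1 N, B j := by
      by_cases hdvd : s = K * r
      · -- divisible case
        have hK2 : 2 ≤ K := by
          rcases Nat.lt_or_ge K 2 with h2 | h2
          · interval_cases K <;> omega
          · exact h2
        have hK1r : (K - 1) * r + 1 * r = K * r := by
          rw [← add_mul]; congr 1; omega
        have hmK1 : s - (K - 1) * r = r := by omega
        have hGs : polyNorm n (G K) ≤ (K : ℝ)⁻¹ * gB (K - 1) := by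
          have hm0 : s - K * r = 0 := by omega
          have hGK : G K = ((K.factorial : ℂ)⁻¹) • L^[K] (Z 0) := by
            simp only [hGdef]
            rw [hm0, if_pos (Nat.zero_le _)]
          have hit : L^[K] (Z 0) = L^[K - 1] (L (Z 0)) := by
            conv_lhs => rw [show K = (K - 1) + 1 from by omega]
            rw [Function.iterate_succ_apply]
          have hLZ0 : L (Z 0) = normalPart n (f r) - f r := by
            rw [eq_sub_of_add_eq hHomEq, hZr]
          have hWhom : (normalPart n (f r) - f r).IsHomogeneous (r + 2) :=
            (normalPart_isHomogeneous (hfhom r le_rfl)).sub (hfhom r le_rfl)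
          have hWnorm : polyNorm n (normalPart n (f r) - f r) ≤ E * a ^ (r + 2) :=
            (polyNorm_normalPart_sub_le _).trans hfr
          have hib := (iter_bound hχ hWhom (K - 1)).2
          have hprod : (∏ i ∈ Finset.range (K - 1), ((r + 2 + i * r : ℕ) : ℝ))
              = ((∏ i ∈ Finset.range (K - 1), (s + 2 - (i + 1) * r) : ℕ) : ℝ) := by
            have hnat : (∏ i ∈ Finset.range (K - 1), (r + 2 + i * r))
                = ∏ i ∈ Finset.range (K - 1), (s + 2 - (i + 1) * r) := by
              rw [← prod_reflect (show (K - 1) * r ≤ s by omega)]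
              exact Finset.prod_congr rfl fun i _ => by omega
            exact_mod_cast congrArg (Nat.cast (R := ℝ)) hnat
          have hfinv : ((K.factorial : ℝ))⁻¹ = (K : ℝ)⁻¹ * (((K - 1).factorial : ℝ))⁻¹ := by
            have h := Nat.factorial_succ (K - 1)
            rw [show K - 1 + 1 = K from by omega] at h
            have h2 : (K.factorial : ℝ) = (K : ℝ) * ((K - 1).factorial : ℝ) := by
              exact_mod_cast congrArg (Nat.cast (R := ℝ)) h
            rw [h2, mul_inv]
          have hDp : 0 ≤ D ^ (K - 1) := pow_nonneg hD _
          have hprodnn : 0 ≤ ∏ i ∈ Finset.range (K - 1), ((r + 2 + i * r : ℕ) : ℝ) := by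
            positivity
          rw [hGK, hit, hLZ0]
          calc polyNorm n (((K.factorial : ℂ)⁻¹) • L^[K - 1] (normalPart n (f r) - f r))
              ≤ ‖(K.factorial : ℂ)⁻¹‖ *
                  polyNorm n (L^[K - 1] (normalPart n (f r) - f r)) := polyNorm_smul_le _ _
            _ = (K.factorial : ℝ)⁻¹ *
                  polyNorm n (L^[K - 1] (normalPart n (f r) - f r)) := by
                rw [norm_inv, Complex.norm_natCast]
            _ ≤ (K.factorial : ℝ)⁻¹ *
                  (D ^ (K - 1) * (∏ i ∈ Finset.range (K - 1), ((r + 2 + i * r : ℕ) : ℝ))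
                    * (E * a ^ (r + 2))) := by
                refine mul_le_mul_of_nonneg_left ?_ (by positivity)
                refine hib.trans ?_
                exact mul_le_mul_of_nonneg_left hWnorm (mul_nonneg hDp hprodnn)
            _ = (K : ℝ)⁻¹ * gB (K - 1) := by
                simp only [hgBdef]
                rw [hprod, hfinv, hmK1]
                ring
        have hGK1 : polyNorm n (G (K - 1)) ≤ gB (K - 1) :=
          hG_generic (K - 1) (by omega) (by omega) (by omega)
        have hspec : polyNorm n (G K) + polyNorm n (G (K - 1)) ≤ B (K - 1) := by
          have h1 : polyNorm n (G K) + polyNorm n (G (K - 1))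
              ≤ (1 + (K : ℝ)⁻¹) * gB (K - 1) := by linarith
          refine h1.trans ?_
          rw [hgBdef, hBdef, hxdef]
          exact gBspec_le_B hE.le ha hD hr hNdef hdvd hK2
        have hset1 : Finset.Icc 1 K = insert K (insert (K - 1) (Finset.Icc 1 (K - 2))) := by
          ext t
          simp only [Finset.mem_Icc, Finset.mem_insert]
          omega
        have hset2 : insert (K - 1) (Finset.Icc 1 (K - 2)) = Finset.Icc 1 (K - 1) := by
          ext t
          simp only [Finset.mem_Icc, Finset.mem_insert]
          omega
        have hnm1 : K ∉ insert (K - 1) (Finset.Icc 1 (K - 2)) := by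
          simp only [Finset.mem_Icc, Finset.mem_insert]
          omega
        have hnm2 : K - 1 ∉ Finset.Icc 1 (K - 2) := by
          simp only [Finset.mem_Icc]
          omega
        rw [hset1, Finset.sum_insert hnm1, Finset.sum_insert hnm2, ← add_assoc]
        have hmid : ∑ j ∈ Finset.Icc 1 (K - 2), polyNorm n (G j)
            ≤ ∑ j ∈ Finset.Icc 1 (K - 2), B j := by
          refine Finset.sum_le_sum fun j hj => ?_
          obtain ⟨hj1, hj2⟩ := Finset.mem_Icc.mp hj
          have hjr2 : j * r ≤ (K - 2) * r := Nat.mul_le_mul_right r hj2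
          have hK2r : (K - 2) * r + 2 * r = K * r := by
            rw [← add_mul]; congr 1; omega
          exact (hG_generic j hj1 (by omega) (by omega)).trans (hgBB j (by omega))
        calc polyNorm n (G K) + polyNorm n (G (K - 1))
              + ∑ j ∈ Finset.Icc 1 (K - 2), polyNorm n (G j)
            ≤ B (K - 1) + ∑ j ∈ Finset.Icc 1 (K - 2), B j := add_le_add hspec hmid
          _ = ∑ j ∈ Finset.Icc 1 (K - 1), B j := by
              rw [← hset2, Finset.sum_insert hnm2]
          _ ≤ ∑ j ∈ Finset.Icc 1 N, B j := by
              refine Finset.sum_le_sum_of_subset_of_nonneg ?_ fun j _ _ => hBnn j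
              exact Finset.Icc_subset_Icc_right (by omega)
      · -- non-divisible case
        have htermwise : ∀ j ∈ Finset.Icc 1 K, polyNorm n (G j) ≤ B j := by
          intro j hj
          obtain ⟨hj1, hj2⟩ := Finset.mem_Icc.mp hj
          have hjrK : j * r ≤ K * r := Nat.mul_le_mul_right r hj2
          exact (hG_generic j hj1 hj2 (by omega)).trans (hgBB j hj2)
        calc ∑ j ∈ Finset.Icc 1 K, polyNorm n (G j) ≤ ∑ j ∈ Finset.Icc 1 K, B j :=
              Finset.sum_le_sum htermwise
          _ ≤ ∑ j ∈ Finset.Icc 1 N, B j := by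
              refine Finset.sum_le_sum_of_subset_of_nonneg ?_ fun j _ _ => hBnn j
              exact Finset.Icc_subset_Icc_right hKN
    -- final chain
    have hB0 : B 0 = E * a ^ (s + 2) := by
      rw [hBdef]; simp
    have hIccN : B 0 + ∑ j ∈ Finset.Icc 1 N, B j = ∑ j ∈ Finset.range (N + 1), B j := by
      have hr1 : Finset.range (N + 1) = insert 0 (Finset.Icc 1 N) := by
        ext t
        simp only [Finset.mem_range, Finset.mem_insert, Finset.mem_Icc]
        omega
      rw [hr1, Finset.sum_insert (by simp)]
    have hbinom : ∑ j ∈ Finset.range (N + 1), B j = E * a ^ (s + 2) * (x + 1) ^ N := by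
      rw [add_pow, Finset.mul_sum]
      refine Finset.sum_congr rfl fun j hj => ?_
      rw [hBdef]
      simp only [one_pow]
      ring
    have hfinal : E * a ^ (s + 2) * (x + 1) ^ N ≤ E * (newRatio r a D) ^ (s + 2) := by
      have h1 : (newRatio r a D) ^ (s + 2) = a ^ (s + 2) * ((1 + x) ^ ((r : ℝ)⁻¹)) ^ (s + 2) := by
        rw [hnR, mul_pow]
      have h2 : ((1 + x) ^ ((r : ℝ)⁻¹)) ^ (s + 2)
          = (1 + x) ^ ((r : ℝ)⁻¹ * ((s + 2 : ℕ) : ℝ)) := by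
        rw [← Real.rpow_natCast ((1 + x) ^ ((r : ℝ)⁻¹)) (s + 2), ← Real.rpow_mul (by linarith)]
      have hexp : ((N : ℕ) : ℝ) ≤ (r : ℝ)⁻¹ * ((s + 2 : ℕ) : ℝ) := by
        rw [mul_comm, ← div_eq_mul_inv, le_div_iff₀ (by exact_mod_cast hr0)]
        exact_mod_cast hNr
      have h3 : (x + 1) ^ N ≤ ((1 + x) ^ ((r : ℝ)⁻¹)) ^ (s + 2) := by
        rw [h2, add_comm x 1, ← Real.rpow_natCast (1 + x) N]
        exact Real.rpow_le_rpow_of_exponent_le hbase hexp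
      rw [h1]
      calc E * a ^ (s + 2) * (x + 1) ^ N
          ≤ E * a ^ (s + 2) * (((1 + x) ^ ((r : ℝ)⁻¹)) ^ (s + 2)) :=
            mul_le_mul_of_nonneg_left h3 (by positivity)
        _ = E * (a ^ (s + 2) * ((1 + x) ^ ((r : ℝ)⁻¹)) ^ (s + 2)) := by ring
    calc polyNorm n (f s + ∑ j ∈ Finset.Icc 1 K, G j)
        ≤ polyNorm n (f s) + polyNorm n (∑ j ∈ Finset.Icc 1 K, G j) := polyNorm_add_le _ _
      _ ≤ polyNorm n (f s) + ∑ j ∈ Finset.Icc 1 K, polyNorm n (G j) := by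
          have := polyNorm_sum_le (Finset.Icc 1 K) G
          linarith
      _ ≤ E * a ^ (s + 2) + ∑ j ∈ Finset.Icc 1 N, B j :=
          add_le_add (hfnorm s (by omega)) key
      _ = ∑ j ∈ Finset.range (N + 1), B j := by rw [← hIccN, hB0]
      _ = E * a ^ (s + 2) * (x + 1) ^ N := hbinom
      _ ≤ E * (newRatio r a D) ^ (s + 2) := hfinal
end
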